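/- arXiv:2503.21737 — 5 statements merged into one kernel-verified Lean document; each statement's English description precedes it below -/
import Mathlib

section
/- If A is a connected subset of a connected topological space M and C is a connected component of M \ A, then M \ C is connected. -/
open Set

/-- A preconnected set covered by two opens with empty triple intersection
lies in one of them. -/
lemma aux_sub_or {M : Type*} [TopologicalSpace M] {s u v : Set M}
    (hs : IsPreconnected s) (hu : IsOpen u) (hv : IsOpen v)
    (hcov : s ⊆ u ∪ v) (hd : s ∩ (u ∩ v) = ∅) : s ⊆ u ∨ s ⊆ v := by
  rcases (s ∩ u).eq_empty_or_nonempty with h1 | h1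
  · right
    intro z hz
    rcases hcov hz with h | h
    · exact (eq_empty_iff_forall_notMem.mp h1 z ⟨hz, h⟩).elim
    · exact h
  rcases (s ∩ v).eq_empty_or_nonempty with h2 | h2
  · left
    intro z hz
    rcases hcov hz with h | h
    · exact h
    · exact (eq_empty_iff_forall_notMem.mp h2 z ⟨hz, h⟩).elim
  exact (eq_empty_iff_forall_notMem.mp hd _ (hs u v hu hv hcov h1 h2).choose_spec).elim

/-- Core step: if `C` is preconnected and nonempty, `u, v` are opens covering `Cᶜ`
with `Cᶜ ∩ u ∩ v = ∅`, then `C ∪ (Cᶜ ∩ v)` is preconnected. -/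
lemma aux_union_preconn {M : Type*} [TopologicalSpace M] [PreconnectedSpace M]
    {C u v : Set M} (hC : IsPreconnected C) (hCne : C.Nonempty)
    (hu : IsOpen u) (hv : IsOpen v) (hcov : Cᶜ ⊆ u ∪ v)
    (hd : Cᶜ ∩ (u ∩ v) = ∅) : IsPreconnected (C ∪ (Cᶜ ∩ v)) := by
  set Q : Set M := Cᶜ ∩ v with hQ
  -- helper: given C ⊆ u', q ∈ Q ∩ v', produce a point of (C ∪ Q) ∩ (u' ∩ v')
  have key : ∀ u' v' : Set M, IsOpen u' → IsOpen v' → C ∪ Q ⊆ u' ∪ v' →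
      C ⊆ u' → ∀ q ∈ Q ∩ v', ((C ∪ Q) ∩ (u' ∩ v')).Nonempty := by
    intro u' v' hu' hv' hcov' hCu' q hq
    have hM : (univ : Set M) ⊆ (u' ∪ u) ∪ (v' ∩ v) := by
      intro m _
      by_cases hmC : m ∈ C
      · exact Or.inl (Or.inl (hCu' hmC))
      · rcases hcov hmC with h | h
        · exact Or.inl (Or.inr h)
        · rcases hcov' (Or.inr ⟨hmC, h⟩) with h' | h'
          · exact Or.inl (Or.inl h')
          · exact Or.inr ⟨h', h⟩
    obtain ⟨c, hc⟩ := hCne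
    have h1 : ((univ : Set M) ∩ (u' ∪ u)).Nonempty := ⟨c, trivial, Or.inl (hCu' hc)⟩
    have h2 : ((univ : Set M) ∩ (v' ∩ v)).Nonempty := ⟨q, trivial, hq.2, hq.1.2⟩
    obtain ⟨z, -, hz1, hz2⟩ :=
      PreconnectedSpace.isPreconnected_univ (u' ∪ u) (v' ∩ v)
        (hu'.union hu) (hv'.inter hv) hM h1 h2
    by_cases hzC : z ∈ C
    · rcases hz1 with h | h
      · exact ⟨z, Or.inl hzC, h, hz2.1⟩
      · -- z ∈ C ∩ u ∩ v : z ∈ C so fine? need z ∈ u'. Use hCu'.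
        exact ⟨z, Or.inl hzC, hCu' hzC, hz2.1⟩
    · -- z ∈ Cᶜ and z ∈ v
      have hzQ : z ∈ Q := ⟨hzC, hz2.2⟩
      rcases hz1 with h | h
      · exact ⟨z, Or.inr hzQ, h, hz2.1⟩
      · exact (eq_empty_iff_forall_notMem.mp hd z ⟨hzC, ⟨h, hz2.2⟩⟩).elim
  intro u' v' hu' hv' hcov' h1 h2
  have hCd : C ∩ (u' ∩ v') = ∅ ∨ (C ∩ (u' ∩ v')).Nonempty := by
    exact (C ∩ (u' ∩ v')).eq_empty_or_nonempty
  rcases hCd with hCd | hCd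
  swap
  · exact hCd.mono (inter_subset_inter_left _ subset_union_left)
  rcases aux_sub_or hC hu' hv' (fun z hz => hcov' (Or.inl hz)) hCd with hCs | hCs
  · obtain ⟨b, hb, hbv⟩ := h2
    rcases hb with hb | hb
    · exact ⟨b, Or.inl hb, hCs hb, hbv⟩
    · exact key u' v' hu' hv' hcov' hCs b ⟨hb, hbv⟩
  · obtain ⟨b, hb, hbu⟩ := h1
    rcases hb with hb | hb
    · exact ⟨b, Or.inl hb, hbu, hCs hb⟩
    · obtain ⟨z, hz, hz1, hz2⟩ :=
        key v' u' hv' hu' (fun m hm => (hcov' hm).symm) hCs b ⟨hb, hbu⟩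
      exact ⟨z, hz, hz2, hz1⟩

/-- If `A` is a connected subset of a connected topological space `M` and `C` is a
connected component of `M \ A`, then `M \ C` is connected. -/
theorem stmt0 {M : Type*} [TopologicalSpace M] [ConnectedSpace M]
    {A : Set M} (hA : IsConnected A) {x : M} (hx : x ∈ Aᶜ) :
    IsConnected (connectedComponentIn Aᶜ x)ᶜ := by
  set C : Set M := connectedComponentIn Aᶜ x with hCdef
  have hCA : C ⊆ Aᶜ := connectedComponentIn_subset _ _
  have hAC : A ⊆ Cᶜ := fun a ha hc => hCA hc ha
  have hxC : x ∈ C := mem_connectedComponentIn hx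
  have hCconn : IsPreconnected C := isPreconnected_connectedComponentIn
  have hCne : C.Nonempty := ⟨x, hxC⟩
  constructor
  · exact hA.nonempty.mono hAC
  intro u v hu hv hcov h1 h2
  by_contra hcon
  have hd : Cᶜ ∩ (u ∩ v) = ∅ := by
    rw [← not_nonempty_iff_eq_empty]
    intro ⟨z, hz, hz1, hz2⟩
    exact hcon ⟨z, hz, hz1, hz2⟩
  have hAd : A ∩ (u ∩ v) = ∅ := by
    apply eq_empty_of_subset_empty
    rw [← hd]
    exact inter_subset_inter_left _ hAC
  -- main argument, symmetric in (u,v)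
  have main : ∀ u₀ v₀ : Set M, IsOpen u₀ → IsOpen v₀ → Cᶜ ⊆ u₀ ∪ v₀ →
      Cᶜ ∩ (u₀ ∩ v₀) = ∅ → A ⊆ u₀ → (Cᶜ ∩ v₀).Nonempty → False := by
    intro u₀ v₀ hu₀ hv₀ hcov₀ hd₀ hAu ⟨b, hb, hbv⟩
    set Q : Set M := Cᶜ ∩ v₀ with hQ
    have hQA : Q ⊆ Aᶜ := by
      intro z hz hzA
      exact (eq_empty_iff_forall_notMem.mp hd₀ z ⟨hz.1, ⟨hAu hzA, hz.2⟩⟩).elim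
    have hconn : IsPreconnected (C ∪ Q) :=
      aux_union_preconn hCconn hCne hu₀ hv₀ hcov₀ hd₀
    have hsub : C ∪ Q ⊆ Aᶜ := union_subset hCA hQA
    have : C ∪ Q ⊆ C :=
      hconn.subset_connectedComponentIn (Or.inl hxC) hsub
    exact hb (this (Or.inr ⟨hb, hbv⟩))
  rcases aux_sub_or hA.isPreconnected hu hv (fun z hz => hcov (hAC hz)) hAd with hAs | hAs
  · exact main u v hu hv hcov hd hAs ⟨h2.choose, h2.choose_spec.1, h2.choose_spec.2⟩
  · have hd' : Cᶜ ∩ (v ∩ u) = ∅ := by rw [inter_comm v u]; exact hd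
    exact main v u hv hu (fun m hm => (hcov hm).symm) hd' hAs
      ⟨h1.choose, h1.choose_spec.1, h1.choose_spec.2⟩
end

section
/- Let G = (V, E) be a graph with V ⊆ M for a topological space M, and suppose each vertex x is assigned an open connected set O(x) ⊆ M containing x such that the O(x) cover M and O(x) ∩ O(y) ≠ ∅ (for x ≠ y) iff {x,y} ∈ E. Then for any set Γ ⊆ V and any connected set A ⊆ ⋃_{x∈Γ} O(x), the set {x ∈ Γ : O(x) ∩ A ≠ ∅} induces a connected subgraph of G. -/
/-- If `G` is a graph embedded in a topological space `M` via open connected sets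
`O x ∋ x` covering `M` whose pairwise intersections encode adjacency, then for a set of
vertices `Γ` and a connected set `A ⊆ ⋃_{x ∈ Γ} O x`, the set
`{x ∈ Γ : O x ∩ A ≠ ∅}` induces a connected subgraph of `G`. -/
theorem stmt2 {M V : Type*} [TopologicalSpace M] (G : SimpleGraph V)
    (ι : V → M) (O : V → Set M)
    (hopen : ∀ x, IsOpen (O x)) (hconn : ∀ x, IsConnected (O x))
    (hmem : ∀ x, ι x ∈ O x)
    (hcover : (⋃ x, O x) = Set.univ)
    (hadj : ∀ x y, x ≠ y → ((O x ∩ O y).Nonempty ↔ G.Adj x y))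
    (Γ : Set V) (A : Set M) (hA : IsConnected A) (hAsub : A ⊆ ⋃ x ∈ Γ, O x) :
    (G.induce {x | x ∈ Γ ∧ (O x ∩ A).Nonempty}).Connected := by
  set S : Set V := {x | x ∈ Γ ∧ (O x ∩ A).Nonempty} with hS
  obtain ⟨a0, ha0⟩ := hA.nonempty
  obtain ⟨x₀, hx₀Γ, hx₀O⟩ := by
    simpa using hAsub ha0
  have hx₀S : x₀ ∈ S := ⟨hx₀Γ, ⟨a0, hx₀O, ha0⟩⟩
  -- P y : y is in S and reachable from x₀ in the induced graph
  let P : V → Prop := fun y => ∃ hy : y ∈ S,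
    (G.induce S).Reachable ⟨x₀, hx₀S⟩ ⟨y, hy⟩
  have hPx₀ : P x₀ := ⟨hx₀S, SimpleGraph.Reachable.refl _⟩
  have key : ∀ y ∈ S, P y := by
    set u : Set M := ⋃ x ∈ {x | P x}, O x with hu
    set v : Set M := ⋃ x ∈ {x | x ∈ S ∧ ¬ P x}, O x with hv
    have hou : IsOpen u := isOpen_biUnion fun x _ => hopen x
    have hov : IsOpen v := isOpen_biUnion fun x _ => hopen x
    have hsub : A ⊆ u ∪ v := by
      intro a ha
      obtain ⟨x, hxΓ, hxO⟩ := by simpa using hAsub ha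
      have hxS : x ∈ S := ⟨hxΓ, ⟨a, hxO, ha⟩⟩
      by_cases hPx : P x
      · exact Or.inl (Set.mem_biUnion hPx hxO)
      · exact Or.inr (Set.mem_biUnion ⟨hxS, hPx⟩ hxO)
    have hAu : (A ∩ u).Nonempty := ⟨a0, ha0, Set.mem_biUnion hPx₀ hx₀O⟩
    have hAv : A ∩ v = ∅ := by
      by_contra hne
      have hAvne : (A ∩ v).Nonempty := Set.nonempty_iff_ne_empty.mpr hne
      obtain ⟨b, hbA, hbu, hbv⟩ := hA.isPreconnected u v hou hov hsub hAu hAvne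
      obtain ⟨x, hPx, hbx⟩ := Set.mem_iUnion₂.mp hbu
      obtain ⟨y, ⟨hyS, hPy⟩, hby⟩ := Set.mem_iUnion₂.mp hbv
      have hPx' : P x := hPx
      obtain ⟨hxS, hreach⟩ := hPx'
      have hxy : x ≠ y := fun h => hPy (h ▸ (hPx : P x))
      have hadjxy : G.Adj x y := (hadj x y hxy).mp ⟨b, hbx, hby⟩
      have : (G.induce S).Adj ⟨x, hxS⟩ ⟨y, hyS⟩ := hadjxy
      exact hPy ⟨hyS, hreach.trans this.reachable⟩
    intro y hyS
    by_contra hPy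
    obtain ⟨a, haO, haA⟩ := hyS.2
    have : a ∈ v := Set.mem_biUnion ⟨hyS, hPy⟩ haO
    exact absurd hAv (Set.nonempty_iff_ne_empty.mp ⟨a, haA, this⟩)
  refine (SimpleGraph.connected_iff _).mpr ⟨?_, ⟨⟨x₀, hx₀S⟩⟩⟩
  intro p q
  obtain ⟨hp, hrp⟩ := key p.1 p.2
  obtain ⟨hq, hrq⟩ := key q.1 q.2
  have hp' : (⟨p.1, hp⟩ : S) = p := rfl
  have hq' : (⟨q.1, hq⟩ : S) = q := rfl
  exact (hp' ▸ hrp).symm.trans (hq' ▸ hrq)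
end

section
/- Let G be a graph embedded in a simply connected space M via open connected sets O(x) covering M whose pairwise intersections encode adjacency. Then for all vertices x, y, any minimal cutset separating x from y is connected in G. -/
/-- `Γ` is a cutset separating `x` from `y` in `G`: every walk from `x` to `y`
meets `Γ`. -/
def IsCutset {V : Type*} (G : SimpleGraph V) (Γ : Set V) (x y : V) : Prop :=
  ∀ p : G.Walk x y, ∃ v ∈ Γ, v ∈ p.support

open Set unitInterval

noncomputable section

namespace Stmt3Aux

local instance : Fact ((0:ℝ) < 1) := ⟨one_pos⟩

/-- gluing a pointwise property through `Path.trans`. -/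
lemma path_trans_prop {X : Type*} [TopologicalSpace X] {P : X → Prop} {a b c : X}
    {γ : Path a b} {γ' : Path b c} (h : ∀ t, P (γ t)) (h' : ∀ t, P (γ' t)) :
    ∀ t, P ((γ.trans γ') t) := by
  intro t
  rw [Path.trans_apply]
  split_ifs <;> [exact h _; exact h' _]

/-- gluing pointwise lifts through `Path.trans`. -/
lemma lift_trans {X : Type*} [TopologicalSpace X] (φ : X → AddCircle (1:ℝ)) {a b c : X}
    {γ : Path a b} {γ' : Path b c} {r s u : ℝ} {L : Path r s} {L' : Path s u}
    (h : ∀ t, ((L t : ℝ) : AddCircle (1:ℝ)) = φ (γ t))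
    (h' : ∀ t, ((L' t : ℝ) : AddCircle (1:ℝ)) = φ (γ' t)) :
    ∀ t, (((L.trans L') t : ℝ) : AddCircle (1:ℝ)) = φ ((γ.trans γ') t) := by
  intro t
  rw [Path.trans_apply, Path.trans_apply]
  split_ifs <;> [exact h _; exact h' _]

/-- two continuous real lifts of the same circle-valued map on a preconnected space
differ by a constant. -/
lemma lift_diff_const {Z : Type*} [TopologicalSpace Z] [PreconnectedSpace Z]
    {g h : Z → ℝ} (hg : Continuous g) (hh : Continuous h)
    (he : ∀ z, ((g z : ℝ) : AddCircle (1:ℝ)) = ((h z : ℝ) : AddCircle (1:ℝ)))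
    (z₀ z₁ : Z) : g z₁ - h z₁ = g z₀ - h z₀ := by
  set k : Z → ℝ := fun z => g z - h z with hk
  have hkc : Continuous k := hg.sub hh
  have hint : ∀ z, ∃ n : ℤ, (n : ℝ) = k z := by
    intro z
    have : ((k z : ℝ) : AddCircle (1:ℝ)) = 0 := by
      show ((g z - h z : ℝ) : AddCircle (1:ℝ)) = 0
      rw [AddCircle.coe_sub, he z, sub_self]
    obtain ⟨n, hn⟩ := (AddCircle.coe_eq_zero_iff (1:ℝ)).mp this
    exact ⟨n, by simpa using hn⟩
  have hclopen : IsClopen {z | k z = k z₀} := by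
    constructor
    · exact isClosed_eq hkc continuous_const
    · rw [isOpen_iff_mem_nhds]
      intro z hz
      have h1 : ∀ᶠ w in nhds z, dist (k w) (k z) < 1 :=
        Metric.tendsto_nhds.mp (hkc.continuousAt (x := z)) 1 one_pos
      filter_upwards [h1] with w hw
      obtain ⟨n, hn⟩ := hint w
      obtain ⟨m, hm⟩ := hint z
      have : n = m := by
        have : |(n : ℝ) - m| < 1 := by
          rw [hn, hm]; simpa [Real.dist_eq] using hw
        exact_mod_cast Int.eq_of_sub_eq_zero (by
          have := abs_lt.mp (by exact_mod_cast (by push_cast at this ⊢; exact this :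
            |((n - m : ℤ) : ℝ)| < 1))
          omega)
      have : k w = k z := by rw [← hn, ← hm, this]
      simpa [Set.mem_setOf_eq] using this.trans hz
  have := hclopen.eq_univ ⟨z₀, rfl⟩
  have hz₁ : k z₁ = k z₀ := Set.eq_univ_iff_forall.mp this z₁
  simpa [hk] using hz₁


lemma coe_d_eq (ζ : AddCircle (1:ℝ)) :
    (((AddCircle.equivIoc 1 (-(2⁻¹:ℝ)) ζ : Ioc (-(2⁻¹:ℝ)) (-(2⁻¹:ℝ)+1)) : ℝ) : AddCircle (1:ℝ))
      = ζ := by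
  exact_mod_cast (AddCircle.equivIoc 1 (-(2⁻¹:ℝ))).symm_apply_apply ζ

lemma norm_ne_half (ζ : AddCircle (1:ℝ)) (h : ‖ζ‖ < 2⁻¹) :
    ζ ≠ ((-(2⁻¹:ℝ) : ℝ) : AddCircle (1:ℝ)) := by
  intro he
  rw [he] at h
  rw [AddCircle.norm_eq] at h
  norm_num [round_eq, abs_of_pos] at h

/-- Any continuous map from the unit square to the circle lifts to `ℝ`. -/
lemma sq_lift (f : C(I × I, AddCircle (1:ℝ))) :
    ∃ F : I × I → ℝ, Continuous F ∧ ∀ z, ((F z : ℝ) : AddCircle (1:ℝ)) = f z := by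
  classical
  set d : AddCircle (1:ℝ) → ℝ :=
    fun ζ => ((AddCircle.equivIoc 1 (-(2⁻¹:ℝ)) ζ : Ioc (-(2⁻¹:ℝ)) (-(2⁻¹:ℝ)+1)) : ℝ) with hd_def
  have hd : ∀ ζ, ((d ζ : ℝ) : AddCircle (1:ℝ)) = ζ := coe_d_eq
  have hdC : ∀ ζ : AddCircle (1:ℝ), ζ ≠ ((-(2⁻¹:ℝ) : ℝ) : AddCircle (1:ℝ)) →
      ContinuousAt d ζ := by
    intro ζ hζ
    exact continuousAt_subtype_val.comp (AddCircle.continuousAt_equivIoc 1 (-(2⁻¹:ℝ)) hζ)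
  obtain ⟨δ, hδpos, hδ⟩ := Metric.uniformContinuous_iff.mp
    (CompactSpace.uniformContinuous_of_continuous f.continuous) 2⁻¹ (by norm_num)
  obtain ⟨n, hn⟩ := exists_nat_gt (1/δ)
  have hn0 : 0 < (n:ℝ) := lt_trans (by positivity) hn
  have hinv : (1:ℝ)/n < δ := by
    rw [div_lt_iff₀ hn0]
    rw [div_lt_iff₀ hδpos] at hn
    linarith [hn]
  set sc : ℕ → I → I := fun k t =>
    ⟨min ((k:ℝ)/n) 1 * t, mul_nonneg (le_min (by positivity) zero_le_one) t.2.1,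
      mul_le_one₀ (min_le_right _ _) t.2.1 t.2.2⟩ with hsc_def
  have hsc_cont : ∀ k, Continuous (sc k) :=
    fun k => Continuous.subtype_mk (continuous_const.mul continuous_subtype_val) _
  have hsc0 : ∀ t, sc 0 t = 0 := by
    intro t; apply Subtype.ext; simp [hsc_def]
  have hscn : ∀ t, sc n t = t := by
    intro t; apply Subtype.ext
    simp [hsc_def, div_self (ne_of_gt hn0)]
  have hsc_dist : ∀ k (t : I), dist (sc (k+1) t) (sc k t) ≤ 1/n := by
    intro k t
    rw [Subtype.dist_eq]
    have hmono : min ((k:ℝ)/n) 1 ≤ min (((k:ℕ)+1:ℝ)/n) 1 :=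
      min_le_min (div_le_div_of_nonneg_right (by linarith) hn0.le) le_rfl
    have hstep : min (((k:ℕ)+1:ℝ)/n) 1 - min ((k:ℝ)/n) 1 ≤ 1/n := by
      rcases le_or_gt ((k:ℝ)/n) 1 with hle | hlt
      · rw [min_eq_left hle]
        have : (((k:ℕ)+1:ℝ))/n = (k:ℝ)/n + 1/n := by ring
        calc min (((k:ℕ)+1:ℝ)/n) 1 - (k:ℝ)/n ≤ (((k:ℕ)+1:ℝ))/n - (k:ℝ)/n :=
              by linarith [min_le_left ((((k:ℕ)+1:ℝ))/n) 1]
          _ = 1/n := by ring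
      · rw [min_eq_right hlt.le]
        have : min (((k:ℕ)+1:ℝ)/n) 1 ≤ 1 := min_le_right _ _
        have hpos : (0:ℝ) ≤ 1/n := by positivity
        linarith
    have ht0 : (0:ℝ) ≤ t := t.2.1
    have ht1 : (t:ℝ) ≤ 1 := t.2.2
    have : |min (((k:ℕ)+1:ℝ)/n) 1 * t - min ((k:ℝ)/n) 1 * t|
        = (min (((k:ℕ)+1:ℝ)/n) 1 - min ((k:ℝ)/n) 1) * t := by
      rw [← sub_mul, abs_of_nonneg (mul_nonneg (by linarith) ht0)]
    calc |((sc (k+1) t : ℝ)) - ((sc k t : ℝ))|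
        = (min (((k:ℕ)+1:ℝ)/n) 1 - min ((k:ℝ)/n) 1) * t := by
          simp only [hsc_def, Real.dist_eq] at *
          push_cast
          push_cast at this
          exact this
      _ ≤ (min (((k:ℕ)+1:ℝ)/n) 1 - min ((k:ℝ)/n) 1) * 1 :=
          mul_le_mul_of_nonneg_left ht1 (by linarith)
      _ ≤ 1/n := by rw [mul_one]; exact hstep
  -- continue
  set S : ℕ → I × I → I × I := fun k z => (sc k z.1, sc k z.2) with hS_def
  have hS_cont : ∀ k, Continuous (S k) := fun k =>
    ((hsc_cont k).comp continuous_fst).prodMk ((hsc_cont k).comp continuous_snd)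
  have hS_dist : ∀ k (z : I × I), dist (S (k+1) z) (S k z) < δ := by
    intro k z
    rw [Prod.dist_eq]
    exact lt_of_le_of_lt (max_le (hsc_dist k z.1) (hsc_dist k z.2)) hinv
  have hS0 : ∀ z, S 0 z = ((0:I), (0:I)) := fun z => by
    simp [hS_def, hsc0]
  have hSn : ∀ z, S n z = z := fun z => by
    simp [hS_def, hscn]
  obtain ⟨r₀, hr₀⟩ := QuotientAddGroup.mk_surjective (f ((0:I), (0:I)))
  set g : ℕ → I × I → AddCircle (1:ℝ) := fun k z => f (S (k+1) z) - f (S k z) with hg_def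
  have hg_cont : ∀ k, Continuous (g k) := fun k =>
    (f.continuous.comp (hS_cont (k+1))).sub (f.continuous.comp (hS_cont k))
  have hg_small : ∀ k z, g k z ≠ ((-(2⁻¹:ℝ) : ℝ) : AddCircle (1:ℝ)) := by
    intro k z
    apply norm_ne_half
    rw [← dist_eq_norm]
    exact hδ (hS_dist k z)
  refine ⟨fun z => r₀ + ∑ k ∈ Finset.range n, d (g k z), ?_, ?_⟩
  · apply continuous_const.add
    apply continuous_finset_sum
    intro k _
    rw [continuous_iff_continuousAt]
    intro z
    exact (hdC _ (hg_small k z)).comp (hg_cont k).continuousAt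
  · intro z
    have hπ : ∀ r s : ℝ, ((r + s : ℝ) : AddCircle (1:ℝ)) = (r : AddCircle (1:ℝ)) + s := by
      intro r s; rfl
    have hsum : ((∑ k ∈ Finset.range n, d (g k z) : ℝ) : AddCircle (1:ℝ))
        = ∑ k ∈ Finset.range n, ((d (g k z) : ℝ) : AddCircle (1:ℝ)) := by
      exact_mod_cast map_sum (QuotientAddGroup.mk' (AddSubgroup.zmultiples (1:ℝ)))
        (fun k => d (g k z)) (Finset.range n)
    rw [hπ, hsum]
    have : ∑ k ∈ Finset.range n, ((d (g k z) : ℝ) : AddCircle (1:ℝ))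
        = ∑ k ∈ Finset.range n, (f (S (k+1) z) - f (S k z)) := by
      apply Finset.sum_congr rfl
      intro k _
      rw [hd]
    rw [this, Finset.sum_range_sub (fun k => f (S k z)), hSn, hS0]
    have : (r₀ : AddCircle (1:ℝ)) = f ((0:I),(0:I)) := hr₀
    rw [this]
    abel

variable {M V : Type*} [TopologicalSpace M]
  {G : SimpleGraph V} {ι : V → M} {O : V → Set M}

/-- chain-connectedness: in a preconnected covered space, any two vertices are joined
by a walk. -/
lemma exists_walk [PreconnectedSpace M]
    (hopen : ∀ x, IsOpen (O x)) (hmem : ∀ x, ι x ∈ O x)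
    (hcover : (⋃ x, O x) = Set.univ)
    (hadj : ∀ x y, x ≠ y → ((O x ∩ O y).Nonempty ↔ G.Adj x y))
    (u v : V) : Nonempty (G.Walk u v) := by
  by_contra hne
  have hnr : ¬ G.Reachable u v := fun h => hne h
  set A : Set M := ⋃ w ∈ {w | G.Reachable u w}, O w with hA
  set B : Set M := ⋃ w ∈ {w | ¬ G.Reachable u w}, O w with hB
  have hAopen : IsOpen A := isOpen_biUnion fun w _ => hopen w
  have hBopen : IsOpen B := isOpen_biUnion fun w _ => hopen w
  have hcov : Set.univ ⊆ A ∪ B := by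
    intro m _
    have : m ∈ ⋃ x, O x := by rw [hcover]; trivial
    obtain ⟨w, hw⟩ := Set.mem_iUnion.mp this
    by_cases h : G.Reachable u w
    · exact Or.inl (Set.mem_biUnion h hw)
    · exact Or.inr (Set.mem_biUnion h hw)
  have hdisj : A ∩ B = ∅ := by
    ext m
    simp only [Set.mem_inter_iff, Set.mem_empty_iff_false, iff_false]
    rintro ⟨hmA, hmB⟩
    obtain ⟨w, hwr, hwm⟩ := Set.mem_iUnion₂.mp hmA
    obtain ⟨w', hw'r, hw'm⟩ := Set.mem_iUnion₂.mp hmB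
    rcases eq_or_ne w w' with rfl | hne'
    · exact hw'r hwr
    · exact hw'r (hwr.trans ((hadj w w' hne').mp ⟨m, hwm, hw'm⟩).reachable)
  have hAne : A.Nonempty :=
    ⟨ι u, Set.mem_biUnion (show u ∈ {w | G.Reachable u w} from SimpleGraph.Reachable.refl u)
      (hmem u)⟩
  have hBne : B.Nonempty := ⟨ι v, Set.mem_biUnion hnr (hmem v)⟩
  obtain ⟨m, hm⟩ := PreconnectedSpace.isPreconnected_univ A B hAopen hBopen hcov
    (by obtain ⟨a, ha⟩ := hAne; exact ⟨a, trivial, ha⟩)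
    (by obtain ⟨b, hb⟩ := hBne; exact ⟨b, trivial, hb⟩)
  rw [hdisj] at hm
  exact hm.2

/-- realize a walk in the graph by a path in the space visiting only the `O`s of
the walk's support. -/
lemma walk_realize [LocallyPathConnectedSpace M]
    (hopen : ∀ x, IsOpen (O x)) (hconn : ∀ x, IsConnected (O x))
    (hmem : ∀ x, ι x ∈ O x)
    (hadj : ∀ x y, x ≠ y → ((O x ∩ O y).Nonempty ↔ G.Adj x y))
    {a b : V} (q : G.Walk a b) :
    ∃ γ : Path (ι a) (ι b), ∀ t, ∃ v ∈ q.support, γ t ∈ O v := by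
  have hpc : ∀ v, IsPathConnected (O v) := fun v =>
    ((hopen v).isConnected_iff_isPathConnected).mp (hconn v)
  induction q with
  | @nil a =>
    exact ⟨Path.refl (ι a), fun t => ⟨a, by simp, by simpa using hmem a⟩⟩
  | @cons a c b h q ih =>
    obtain ⟨γ', hγ'⟩ := ih
    obtain ⟨m, hma, hmc⟩ := (hadj a c (G.ne_of_adj h)).mpr h
    have J1 : JoinedIn (O a) (ι a) m := (hpc a).joinedIn _ (hmem a) _ hma
    have J2 : JoinedIn (O c) m (ι c) := (hpc c).joinedIn _ hmc _ (hmem c)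
    refine ⟨(J1.somePath.trans J2.somePath).trans γ', ?_⟩
    have h1 : ∀ t, ∃ v ∈ (SimpleGraph.Walk.cons h q).support,
        (J1.somePath.trans J2.somePath) t ∈ O v := by
      apply path_trans_prop (P := fun z => ∃ v ∈ (SimpleGraph.Walk.cons h q).support, z ∈ O v)
      · intro t; exact ⟨a, by simp, J1.somePath_mem t⟩
      · intro t; exact ⟨c, by simp [SimpleGraph.Walk.start_mem_support], J2.somePath_mem t⟩
    have h2 : ∀ t, ∃ v ∈ (SimpleGraph.Walk.cons h q).support, γ' t ∈ O v := by
      intro t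
      obtain ⟨v, hv, hvm⟩ := hγ' t
      exact ⟨v, by simp [hv], hvm⟩
    exact path_trans_prop (P := fun z => ∃ v ∈ (SimpleGraph.Walk.cons h q).support, z ∈ O v)
      h1 h2


/-- singleton induced subgraph is connected -/
lemma induce_singleton_connected {V : Type*} (G : SimpleGraph V) (x : V) :
    (G.induce {x}).Connected := by
  rw [SimpleGraph.connected_iff]
  refine ⟨?_, ⟨⟨x, rfl⟩⟩⟩
  intro a b
  have : a = b := Subtype.ext (by rw [show a.1 = x from a.2, show b.1 = x from b.2])
  exact this ▸ SimpleGraph.Reachable.refl a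

lemma not_cutset_iff {V : Type*} (G : SimpleGraph V) (Γ' : Set V) (x y : V) :
    ¬ IsCutset G Γ' x y ↔ ∃ p : G.Walk x y, ∀ v ∈ Γ', v ∉ p.support := by
  rw [IsCutset]
  push_neg
  rfl

end Stmt3Aux

open Stmt3Aux in
/-- For a graph embedded in a simply connected (normal, locally path-connected) space via
open connected sets covering the space whose pairwise intersections encode adjacency,
every minimal cutset separating two vertices is connected in the graph. -/
theorem stmt3 {M V : Type*} [TopologicalSpace M] [SimplyConnectedSpace M]
    [LocallyPathConnectedSpace M] [NormalSpace M] (G : SimpleGraph V)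
    (ι : V → M) (O : V → Set M)
    (hopen : ∀ x, IsOpen (O x)) (hconn : ∀ x, IsConnected (O x))
    (hmem : ∀ x, ι x ∈ O x)
    (hcover : (⋃ x, O x) = Set.univ)
    (hadj : ∀ x y, x ≠ y → ((O x ∩ O y).Nonempty ↔ G.Adj x y))
    (x y : V) (Γ : Set V)
    (hcut : IsCutset G Γ x y)
    (hmin : ∀ w ∈ Γ, ¬ IsCutset G (Γ \ {w}) x y) :
    (G.induce Γ).Connected := by
  classical
  by_contra hnc
  have hpc : ∀ v, IsPathConnected (O v) := fun v =>
    ((hopen v).isConnected_iff_isPathConnected).mp (hconn v)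
  -- if `x ∈ Γ` then `Γ = {x}` and we are done; same for `y`.
  by_cases hxΓ : x ∈ Γ
  · have hΓx : Γ = {x} := by
      apply Set.eq_singleton_iff_unique_mem.mpr
      refine ⟨hxΓ, fun w hw => ?_⟩
      by_contra hwx
      obtain ⟨q, hq⟩ := (not_cutset_iff G _ x y).mp (hmin w hw)
      exact hq x ⟨hxΓ, fun h => hwx ((Set.mem_singleton_iff.mp h).symm)⟩ q.start_mem_support
    exact hnc (hΓx ▸ induce_singleton_connected G x)
  by_cases hyΓ : y ∈ Γ
  · have hΓy : Γ = {y} := by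
      apply Set.eq_singleton_iff_unique_mem.mpr
      refine ⟨hyΓ, fun w hw => ?_⟩
      by_contra hwy
      obtain ⟨q, hq⟩ := (not_cutset_iff G _ x y).mp (hmin w hw)
      exact hq y ⟨hyΓ, fun h => hwy ((Set.mem_singleton_iff.mp h).symm)⟩ q.end_mem_support
    exact hnc (hΓy ▸ induce_singleton_connected G y)
  -- Γ is nonempty
  obtain ⟨q0⟩ := exists_walk (G := G) hopen hmem hcover hadj x y
  obtain ⟨w0, hw0Γ, _⟩ := hcut q0
  -- get two vertices of Γ not connected in the induced graph
  have hnpre : ¬ (G.induce Γ).Preconnected := by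
    intro hpre
    exact hnc ((SimpleGraph.connected_iff _).mpr ⟨hpre, ⟨⟨w0, hw0Γ⟩⟩⟩)
  rw [SimpleGraph.Preconnected] at hnpre
  push_neg at hnpre
  obtain ⟨aS, bS, hab⟩ := hnpre
  -- the two "sides" of Γ
  set Γ₁ : Set V := {w | ∃ h : w ∈ Γ, (G.induce Γ).Reachable aS ⟨w, h⟩} with hΓ₁def
  have haux : aS.1 ∈ Γ₁ := ⟨aS.2, SimpleGraph.Reachable.refl _⟩
  have hΓ₁sub : Γ₁ ⊆ Γ := fun w hw => hw.1
  have hbΓ₁ : bS.1 ∉ Γ₁ := fun h => hab h.2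
  have hclosed : ∀ w ∈ Γ₁, ∀ w', w' ∈ Γ → G.Adj w w' → w' ∈ Γ₁ := by
    rintro w ⟨hwΓ, hr⟩ w' hw' hA
    exact ⟨hw', hr.trans (SimpleGraph.Adj.reachable
      (by simpa [SimpleGraph.comap_adj] using hA))⟩
  -- the x-side component
  set A : Set V := {v | ∃ q : G.Walk x v, ∀ z ∈ q.support, z ∉ Γ} with hAdef
  have hxA : x ∈ A := ⟨SimpleGraph.Walk.nil, by simpa using hxΓ⟩
  have hAnotΓ : ∀ v ∈ A, v ∉ Γ := by
    rintro v ⟨q, hq⟩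
    exact hq v q.end_mem_support
  have hAadj : ∀ v ∈ A, ∀ u, G.Adj v u → u ∉ Γ → u ∈ A := by
    rintro v ⟨q, hq⟩ u hvu huΓ
    refine ⟨q.concat hvu, fun z hz => ?_⟩
    rw [SimpleGraph.Walk.support_concat, List.mem_append] at hz
    rcases hz with hz | hz
    · exact hq z hz
    · simpa using fun h => (by simp at hz; exact hz ▸ huΓ : z ∈ Γ → False) h
  have hAy : ∀ v ∈ A, ∀ r : G.Walk v y, (∀ z ∈ r.support, z ∉ Γ) → False := by
    rintro v ⟨q, hq⟩ r hr
    obtain ⟨z, hzΓ, hzs⟩ := hcut (q.append r)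
    rw [SimpleGraph.Walk.mem_support_append_iff] at hzs
    rcases hzs with hzs | hzs
    · exact hq z hzs hzΓ
    · exact hr z hzs hzΓ
  have hyA : y ∉ A := by
    intro hy'
    exact hAy y hy' SimpleGraph.Walk.nil (by simpa using hyΓ)
  -- the rest of the vertices
  set Rc : Set V := {v | v ∉ A ∧ v ∉ Γ₁} with hRcdef
  -- the three open regions
  set UA : Set M := ⋃ v ∈ A, O v with hUAdef
  set UC : Set M := ⋃ v ∈ Γ₁, O v with hUCdef
  set UR : Set M := ⋃ v ∈ Rc, O v with hURdef
  have hUAopen : IsOpen UA := isOpen_biUnion fun w _ => hopen w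
  have hUCopen : IsOpen UC := isOpen_biUnion fun w _ => hopen w
  have hURopen : IsOpen UR := isOpen_biUnion fun w _ => hopen w
  have hcov : ∀ m : M, m ∈ UA ∪ UC ∪ UR := by
    intro m
    have : m ∈ ⋃ v, O v := by rw [hcover]; trivial
    obtain ⟨v, hv⟩ := Set.mem_iUnion.mp this
    by_cases h1 : v ∈ A
    · exact Or.inl (Or.inl (Set.mem_biUnion h1 hv))
    by_cases h2 : v ∈ Γ₁
    · exact Or.inl (Or.inr (Set.mem_biUnion h2 hv))
    · exact Or.inr (Set.mem_biUnion (⟨h1, h2⟩ : v ∈ Rc) hv)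
  -- the key geometric disjointness
  have hkey : ∀ m : M, m ∈ UA → m ∈ UC → m ∈ UR → False := by
    intro m hmA hmC hmR
    obtain ⟨a, haA, hma⟩ := Set.mem_iUnion₂.mp hmA
    obtain ⟨c, hcΓ₁, hmc⟩ := Set.mem_iUnion₂.mp hmC
    obtain ⟨r, hrRc, hmr⟩ := Set.mem_iUnion₂.mp hmR
    by_cases hrΓ : r ∈ Γ
    · have hne : c ≠ r := fun h => hrRc.2 (h ▸ hcΓ₁)
      have : G.Adj c r := (hadj c r hne).mp ⟨m, hmc, hmr⟩
      exact hrRc.2 (hclosed c hcΓ₁ r hrΓ this)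
    · have hne : a ≠ r := fun h => hrRc.1 (h ▸ haA)
      have : G.Adj a r := (hadj a r hne).mp ⟨m, hma, hmr⟩
      exact hrRc.1 (hAadj a haA r this hrΓ)
  -- the two faces
  set S0 : Set M := UC ∩ UA with hS0def
  set S1 : Set M := UC ∩ UR with hS1def
  have hS0open : IsOpen S0 := hUCopen.inter hUAopen
  have hS1open : IsOpen S1 := hUCopen.inter hURopen
  have hUAS1 : ∀ m ∈ UA, m ∉ S1 := fun m hm hs => hkey m hm hs.1 hs.2
  have hS0S1 : ∀ m ∈ S0, m ∉ S1 := fun m hm => hUAS1 m hm.2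
  -- the deep region
  set Cd : Set M := (UA ∪ UR)ᶜ with hCddef
  have hCdclosed : IsClosed Cd := (hUAopen.union hURopen).isClosed_compl
  have hCdsub : Cd ⊆ UC := by
    intro m hm
    rcases hcov m with (h | h) | h
    · exact absurd (Or.inl h) hm
    · exact h
    · exact absurd (Or.inr h) hm
  -- Urysohn
  obtain ⟨ψ, hψ0, hψ1, hψmem⟩ := exists_continuous_zero_one_of_isClosed
    hUCopen.isClosed_compl hCdclosed
    (by
      rw [Set.disjoint_left]
      intro m hm hm'
      exact hm (hCdsub hm'))
  -- the circle-valued map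
  set φ : M → AddCircle (1:ℝ) :=
    fun m => if m ∈ S1 then ((-(ψ m)/2 : ℝ) : AddCircle (1:ℝ))
      else ((ψ m/2 : ℝ) : AddCircle (1:ℝ)) with hφdef
  have hco : Continuous ((↑) : ℝ → AddCircle (1:ℝ)) := AddCircle.continuous_mk' 1
  -- frontier facts
  have hfr1 : ∀ m ∈ frontier S1, m ∈ UC → ψ m = 1 := by
    intro m hmf hmUC
    rw [hS1open.frontier_eq] at hmf
    obtain ⟨hmcl, hmS1⟩ := hmf
    have hmUA : m ∉ UA := by
      intro hmUA
      have : (S0 ∩ S1).Nonempty := by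
        rw [_root_.mem_closure_iff] at hmcl
        exact hmcl S0 hS0open ⟨hmUC, hmUA⟩
      obtain ⟨z, hz⟩ := this
      exact hS0S1 z hz.1 hz.2
    have hmUR : m ∉ UR := fun h => hmS1 ⟨hmUC, h⟩
    exact hψ1 (by simp [hCddef, hmUA, hmUR])
  have hfr0 : ∀ m ∈ frontier S1, m ∉ UC → ψ m = 0 := fun m _ h => hψ0 h
  have hperiod : ∀ r : ℝ, ((r + 1 : ℝ) : AddCircle (1:ℝ)) = ((r : ℝ) : AddCircle (1:ℝ)) :=
    fun r => AddCircle.coe_add_period 1 r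
  have hφcont : Continuous φ := by
    rw [hφdef]
    apply Continuous.if
    · intro m hmf
      have hmf' : m ∈ frontier S1 := by simpa using hmf
      by_cases hmUC : m ∈ UC
      · rw [hfr1 m hmf' hmUC]
        have := AddCircle.coe_add_period (1:ℝ) (-(1:ℝ)/2)
        rw [show (-(1:ℝ)/2 + 1 : ℝ) = (1:ℝ)/2 by ring] at this
        rw [← this]
      · rw [hfr0 m hmf' hmUC]
        norm_num
    · exact hco.comp ((ψ.continuous.neg).div_const 2)
    · exact hco.comp (ψ.continuous.div_const 2)
  -- real-valued local lifts of φ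
  set lamA : M → ℝ := fun m => ψ m / 2 with hlamAdef
  set lamR : M → ℝ := fun m => 1 - ψ m / 2 with hlamRdef
  set mu : M → ℝ := fun m => if m ∈ S1 then 1 - ψ m / 2 else ψ m / 2 with hmudef
  set lamB : M → ℝ := fun m => if m ∈ UA then 1 + ψ m / 2 else 1 - ψ m / 2 with hlamBdef
  have hlamAcont : Continuous lamA := ψ.continuous.div_const 2
  have hlamRcont : Continuous lamR := continuous_const.sub (ψ.continuous.div_const 2)
  have hhalf : ∀ m : M, ((1 - ψ m / 2 : ℝ) : AddCircle (1:ℝ))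
      = ((-(ψ m)/2 : ℝ) : AddCircle (1:ℝ)) := by
    intro m
    rw [show (1 - ψ m / 2 : ℝ) = -(ψ m)/2 + 1 by ring]
    exact hperiod _
  have hliftA : ∀ m, m ∉ S1 → ((lamA m : ℝ) : AddCircle (1:ℝ)) = φ m := by
    intro m hm
    rw [hφdef]
    simp only [if_neg hm]
    rfl
  have hliftmu : ∀ m, ((mu m : ℝ) : AddCircle (1:ℝ)) = φ m := by
    intro m
    rw [hφdef, hmudef]
    by_cases hm : m ∈ S1
    · simp only [if_pos hm]
      exact hhalf m
    · simp only [if_neg hm]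
  have hURnotC : ∀ m ∈ UR, m ∉ S1 → ψ m = 0 := by
    intro m hm hm'
    apply hψ0
    intro hmUC
    exact hm' ⟨hmUC, hm⟩
  have hliftR : ∀ m, m ∈ UR → ((lamR m : ℝ) : AddCircle (1:ℝ)) = φ m := by
    intro m hm
    by_cases hm' : m ∈ S1
    · rw [hφdef]; simp only [if_pos hm']
      exact hhalf m
    · rw [hφdef]; simp only [if_neg hm']
      rw [hlamRdef]
      simp only [hURnotC m hm hm']
      norm_num
  have hliftB : ∀ m, m ∈ UA ∪ UR → ((lamB m : ℝ) : AddCircle (1:ℝ)) = φ m := by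
    intro m hm
    rcases Classical.em (m ∈ UA) with hmA | hmA
    · rw [hlamBdef]
      simp only [if_pos hmA]
      rw [show (1 + ψ m / 2 : ℝ) = ψ m/2 + 1 by ring, hperiod]
      exact hliftA m (hUAS1 m hmA)
    · have hmR : m ∈ UR := hm.resolve_left hmA
      rw [hlamBdef]
      simp only [if_neg hmA]
      exact hliftR m hmR
  -- continuity of the piecewise lifts on their domains
  have hmucont : ContinuousOn mu UC := by
    rw [hmudef]
    apply ContinuousOn.if
    · intro m hmf
      have : ψ m = 1 := hfr1 m (by simpa using hmf.2) hmf.1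
      simp [this]
      norm_num
    · exact (continuous_const.sub (ψ.continuous.div_const 2)).continuousOn
    · exact (ψ.continuous.div_const 2).continuousOn
  have hlamBcont : ContinuousOn lamB (UA ∪ UR) := by
    rw [hlamBdef]
    apply ContinuousOn.if
    · intro m hmf
      have hmf' : m ∈ frontier UA := by simpa using hmf.2
      rw [hUAopen.frontier_eq] at hmf'
      obtain ⟨hmcl, hmnot⟩ := hmf'
      have hmUR : m ∈ UR := (hmf.1.resolve_left hmnot)
      have hψm : ψ m = 0 := by
        apply hψ0
        intro hmUC
        have hmS1 : m ∈ S1 := ⟨hmUC, hmUR⟩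
        rw [_root_.mem_closure_iff] at hmcl
        obtain ⟨z, hz1, hz2⟩ := hmcl S1 hS1open hmS1
        exact hUAS1 z hz2 hz1
      simp [hψm]
    · exact (continuous_const.add (ψ.continuous.div_const 2)).continuousOn
    · exact (continuous_const.sub (ψ.continuous.div_const 2)).continuousOn
  -- decompose a walk through w1 := aS.1 only
  set w1 : V := aS.1 with hw1def
  obtain ⟨qr, hqr⟩ := (not_cutset_iff G _ x y).mp (hmin w1 (hΓ₁sub haux))
  set qb : G.Walk x y := qr.bypass with hqbdef
  have hqbnodup : qb.support.Nodup := qr.bypass_isPath.support_nodup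
  have hqΓ : ∀ z ∈ qb.support, z ∈ Γ → z = w1 := by
    intro z hz hzΓ
    by_contra hne
    exact hqr z ⟨hzΓ, hne⟩ (qr.support_bypass_subset hz)
  have hw1sup : w1 ∈ qb.support := by
    obtain ⟨z, hzΓ, hzs⟩ := hcut qb
    exact (hqΓ z hzs hzΓ) ▸ hzs
  set q1 : G.Walk x w1 := qb.takeUntil w1 hw1sup with hq1def
  set q2 : G.Walk w1 y := qb.dropUntil w1 hw1sup with hq2def
  have hxw1 : x ≠ w1 := fun h => hxΓ (h ▸ hΓ₁sub haux)
  have hyw1 : w1 ≠ y := fun h => hyΓ (h ▸ hΓ₁sub haux)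
  obtain ⟨u, hadj_w1u, r, hr⟩ := q1.reverse.exists_eq_cons_of_ne (Ne.symm hxw1)
  have hw1r : w1 ∉ r.support := by
    have hcount := qb.count_support_takeUntil_eq_one hw1sup
    have : q1.reverse.support.count w1 = 1 := by
      rw [SimpleGraph.Walk.support_reverse, List.count_reverse]
      exact hcount
    rw [hr, SimpleGraph.Walk.support_cons, List.count_cons_self] at this
    have : r.support.count w1 = 0 := by omega
    exact List.count_eq_zero.mp this
  have hrq1 : ∀ z ∈ r.support, z ∈ q1.support := by
    intro z hz
    have : z ∈ q1.reverse.support := by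
      rw [hr, SimpleGraph.Walk.support_cons]
      exact List.mem_cons_of_mem _ hz
    rw [SimpleGraph.Walk.support_reverse, List.mem_reverse] at this
    exact this
  have hrnotΓ : ∀ z ∈ r.support, z ∉ Γ := by
    intro z hz hzΓ
    have := hqΓ z (qb.support_takeUntil_subset hw1sup (hrq1 z hz)) hzΓ
    exact hw1r (this ▸ hz)
  have hrsupA : ∀ z ∈ r.support, z ∈ A := by
    intro z hz
    have hz' : z ∈ r.reverse.support := by
      rw [SimpleGraph.Walk.support_reverse, List.mem_reverse]; exact hz
    refine ⟨r.reverse.takeUntil z hz', fun s hs => ?_⟩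
    have : s ∈ r.reverse.support := r.reverse.support_takeUntil_subset hz' hs
    rw [SimpleGraph.Walk.support_reverse, List.mem_reverse] at this
    exact hrnotΓ s this
  have huA : u ∈ A := hrsupA u r.start_mem_support
  -- decompose the second half
  obtain ⟨v, hadj_w1v, r2, hr2⟩ := q2.exists_eq_cons_of_ne hyw1
  have hw1r2 : w1 ∉ r2.support := by
    intro hin
    have hsplit : qb.support = q1.support ++ q2.support.tail := by
      conv_lhs => rw [← qb.take_spec hw1sup]
      rw [SimpleGraph.Walk.support_append]
    have htail : q2.support.tail = r2.support := by
      rw [hr2, SimpleGraph.Walk.support_cons]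
      rfl
    rw [hsplit, htail] at hqbnodup
    have hdisj := List.disjoint_of_nodup_append hqbnodup
    exact hdisj (q1.end_mem_support) hin
  have hr2notΓ : ∀ z ∈ r2.support, z ∉ Γ := by
    intro z hz hzΓ
    have hz2 : z ∈ q2.support := by
      rw [hr2, SimpleGraph.Walk.support_cons]
      exact List.mem_cons_of_mem _ hz
    have := hqΓ z (qb.support_dropUntil_subset hw1sup hz2) hzΓ
    exact hw1r2 (this ▸ hz)
  have hr2Rc : ∀ z ∈ r2.support, z ∈ Rc := by
    intro z hz
    refine ⟨?_, fun h => hr2notΓ z hz (hΓ₁sub h)⟩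
    intro hzA
    refine hAy z hzA (r2.dropUntil z hz) fun s hs => ?_
    exact hr2notΓ s (r2.support_dropUntil_subset hz hs)
  have hvRc : v ∈ Rc := hr2Rc v r2.start_mem_support
  -- crossing points
  obtain ⟨m1, hm1u, hm1w⟩ := (hadj u w1 (hadj_w1u.symm.ne)).mpr hadj_w1u.symm
  obtain ⟨m2, hm2w, hm2v⟩ := (hadj w1 v (hadj_w1v.ne)).mpr hadj_w1v
  have hm1S0 : m1 ∈ S0 := ⟨Set.mem_biUnion haux hm1w, Set.mem_biUnion huA hm1u⟩
  have hm2S1 : m2 ∈ S1 := ⟨Set.mem_biUnion haux hm2w, Set.mem_biUnion hvRc hm2v⟩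
  -- realize the first walk as a path through the three regions
  obtain ⟨sa, hsa⟩ := walk_realize (G := G) hopen hconn hmem hadj r.reverse
  have hsaUA : ∀ t, sa t ∈ UA := by
    intro t
    obtain ⟨z, hz, hzm⟩ := hsa t
    rw [SimpleGraph.Walk.support_reverse, List.mem_reverse] at hz
    exact Set.mem_biUnion (hrsupA z hz) hzm
  have J1 : JoinedIn (O u) (ι u) m1 := (hpc u).joinedIn _ (hmem u) _ hm1u
  set gamPre : Path (ι x) m1 := sa.trans J1.somePath with hgamPre
  have hpreUA : ∀ t, gamPre t ∈ UA :=
    path_trans_prop hsaUA (fun t => Set.mem_biUnion huA (J1.somePath_mem t))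
  have Jw : JoinedIn (O w1) m1 m2 := (hpc w1).joinedIn _ hm1w _ hm2w
  set gamMid : Path m1 m2 := Jw.somePath with hgamMid
  have hmidUC : ∀ t, gamMid t ∈ UC := fun t => Set.mem_biUnion haux (Jw.somePath_mem t)
  have J2 : JoinedIn (O v) m2 (ι v) := (hpc v).joinedIn _ hm2v _ (hmem v)
  obtain ⟨sb, hsb⟩ := walk_realize (G := G) hopen hconn hmem hadj r2
  have hsbUR : ∀ t, sb t ∈ UR := by
    intro t
    obtain ⟨z, hz, hzm⟩ := hsb t
    exact Set.mem_biUnion (hr2Rc z hz) hzm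
  set gamPost : Path m2 (ι y) := J2.somePath.trans sb with hgamPost
  have hpostUR : ∀ t, gamPost t ∈ UR :=
    path_trans_prop (fun t => Set.mem_biUnion hvRc (J2.somePath_mem t)) hsbUR
  -- realize the second walk (avoiding Γ₁ entirely)
  set w2 : V := bS.1 with hw2def
  obtain ⟨qs, hqs⟩ := (not_cutset_iff G _ x y).mp (hmin w2 bS.2)
  have hqsAR : ∀ z ∈ qs.support, z ∈ A ∨ z ∈ Rc := by
    intro z hz
    by_cases hzA : z ∈ A
    · exact Or.inl hzA
    by_cases hzΓ : z ∈ Γ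
    · rcases eq_or_ne z w2 with rfl | hne
      · exact Or.inr ⟨hzA, hbΓ₁⟩
      · exact absurd hz (hqs z ⟨hzΓ, hne⟩)
    · exact Or.inr ⟨hzA, fun h => hzΓ (hΓ₁sub h)⟩
  obtain ⟨s2, hs2⟩ := walk_realize (G := G) hopen hconn hmem hadj qs
  have hs2U : ∀ t, s2 t ∈ UA ∪ UR := by
    intro t
    obtain ⟨z, hz, hzm⟩ := hs2 t
    rcases hqsAR z hz with h | h
    · exact Or.inl (Set.mem_biUnion h hzm)
    · exact Or.inr (Set.mem_biUnion h hzm)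
  -- the loop
  set sig1 : Path (ι x) (ι y) := (gamPre.trans gamMid).trans gamPost with hsig1
  set sig : Path (ι x) (ι x) := sig1.trans s2.symm with hsig
  -- the explicit lift of φ ∘ sig
  set LPre : Path (lamA (ι x)) (lamA m1) := gamPre.map hlamAcont with hLPre
  have hmuO : ContinuousOn mu (Set.range gamMid) := by
    apply hmucont.mono
    rw [Set.range_subset_iff]
    exact hmidUC
  have hcast1 : lamA m1 = mu m1 := by
    rw [hmudef, hlamAdef]
    simp only [if_neg (hS0S1 m1 hm1S0)]
  set LMid : Path (lamA m1) (mu m2) := (gamMid.map' hmuO).cast hcast1 rfl with hLMid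
  have hcast2 : mu m2 = lamR m2 := by
    rw [hmudef, hlamRdef]
    simp only [if_pos hm2S1]
  set LPost : Path (mu m2) (lamR (ι y)) := (gamPost.map hlamRcont).cast hcast2 rfl with hLPost
  have hιynA : ι y ∉ UA := by
    intro hin
    obtain ⟨a', ha'A, hma'⟩ := Set.mem_iUnion₂.mp hin
    have hne : a' ≠ y := fun h => hyA (h ▸ ha'A)
    have : G.Adj a' y := (hadj a' y hne).mp ⟨ι y, hma', hmem y⟩
    exact hyA (hAadj a' ha'A y this hyΓ)
  have hιxUA : ι x ∈ UA := Set.mem_biUnion hxA (hmem x)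
  have hlamBO : ContinuousOn lamB (Set.range (s2.symm)) := by
    apply hlamBcont.mono
    rw [Set.range_subset_iff]
    intro t
    exact hs2U (unitInterval.symm t)
  have hcast3 : lamR (ι y) = lamB (ι y) := by
    rw [hlamBdef, hlamRdef]
    simp only [if_neg hιynA]
  set LBack : Path (lamR (ι y)) (lamB (ι x)) := ((s2.symm).map' hlamBO).cast hcast3 rfl
    with hLBack
  set L : Path (lamA (ι x)) (lamB (ι x)) := ((LPre.trans LMid).trans LPost).trans LBack with hL
  -- it is a lift
  have hliftL : ∀ t, ((L t : ℝ) : AddCircle (1:ℝ)) = φ (sig t) := by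
    apply lift_trans φ
    · apply lift_trans φ
      · apply lift_trans φ
        · intro t
          show ((lamA (gamPre t) : ℝ) : AddCircle (1:ℝ)) = φ (gamPre t)
          exact hliftA _ (hUAS1 _ (hpreUA t))
        · intro t
          show ((mu (gamMid t) : ℝ) : AddCircle (1:ℝ)) = φ (gamMid t)
          exact hliftmu _
      · intro t
        show ((lamR (gamPost t) : ℝ) : AddCircle (1:ℝ)) = φ (gamPost t)
        exact hliftR _ (hpostUR t)
    · intro t
      show ((lamB (s2.symm t) : ℝ) : AddCircle (1:ℝ)) = φ (s2.symm t)
      exact hliftB _ (hs2U (unitInterval.symm t))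
  -- winding of the explicit lift
  have hwind : L 1 - L 0 = 1 := by
    have h0 : L 0 = lamA (ι x) := L.source
    have h1 : L 1 = lamB (ι x) := L.target
    rw [h0, h1, hlamBdef, hlamAdef]
    simp only [if_pos hιxUA]
    ring
  -- the null-homotopy
  have hhom : Path.Homotopic sig (Path.refl (ι x)) :=
    SimplyConnectedSpace.paths_homotopic sig (Path.refl (ι x))
  obtain ⟨H⟩ := hhom
  set fC : C(I × I, AddCircle (1:ℝ)) := ⟨fun z => φ (H z), hφcont.comp H.continuous⟩ with hfC
  obtain ⟨F, hFc, hFlift⟩ := sq_lift fC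
  -- the four edges
  have hbot : F (1, 0) - F (0, 0) = 0 := by
    have := lift_diff_const (g := fun t : I => F (t, 0)) (h := fun _ : I => F (0, 0))
      (hFc.comp (continuous_id.prodMk continuous_const)) continuous_const
      (fun t => by
        rw [hFlift (t, (0:I)), hFlift ((0:I), (0:I))]
        show φ (H (t, 0)) = φ (H (0, 0))
        rw [H.source t, H.source 0]) 0 1
    simpa using this
  have htop : F (1, 1) - F (0, 1) = 0 := by
    have := lift_diff_const (g := fun t : I => F (t, 1)) (h := fun _ : I => F (0, 1))
      (hFc.comp (continuous_id.prodMk continuous_const)) continuous_const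
      (fun t => by
        rw [hFlift (t, (1:I)), hFlift ((0:I), (1:I))]
        show φ (H (t, 1)) = φ (H (0, 1))
        rw [H.target t, H.target 0]) 0 1
    simpa using this
  have hright : F (1, 1) - F (1, 0) = 0 := by
    have := lift_diff_const (g := fun t : I => F (1, t)) (h := fun _ : I => F (1, 0))
      (hFc.comp (continuous_const.prodMk continuous_id)) continuous_const
      (fun t => by
        rw [hFlift ((1:I), t), hFlift ((1:I), (0:I))]
        show φ (H (1, t)) = φ (H (1, 0))
        rw [H.apply_one t, H.apply_one 0]
        rfl) 0 1
    simpa using this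
  have hleft : F (0, 1) - F (0, 0) = L 1 - L 0 := by
    have := lift_diff_const (g := fun t : I => F (0, t)) (h := fun t : I => L t)
      (hFc.comp (continuous_const.prodMk continuous_id)) L.continuous
      (fun t => by
        rw [hFlift ((0:I), t)]
        show φ (H (0, t)) = ((L t : ℝ) : AddCircle (1:ℝ))
        rw [H.apply_zero t]
        exact (hliftL t).symm) 0 1
    linarith [this]
  rw [hwind] at hleft
  linarith [hbot, htop, hright, hleft]
end
end

section
/- With the ε-net graph G_ε as above on a length space (or Riemannian manifold) M: for distinct vertices x, y, the graph distance satisfies d_M(x,y)/(4ε) ≤ d_{G_ε}(x,y) ≤ (Δ(ε)/(2ε)) · d_M(x,y). -/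
/-- The graph `G_ε` induced by an `ε`-net `V` of a metric space:
distinct points are adjacent iff their `2ε`-balls intersect. -/
def netGraph {M : Type*} [MetricSpace M] (ε : ℝ) (V : Set M) : SimpleGraph V where
  Adj x y := x ≠ y ∧
    (Metric.ball (x : M) (2 * ε) ∩ Metric.ball (y : M) (2 * ε)).Nonempty
  symm := by
    constructor
    intro x y h
    exact ⟨h.1.symm, by rw [Set.inter_comm]; exact h.2⟩
  loopless := by
    constructor
    intro x h
    exact h.1 rfl

private lemma netGraph_adj_of {M : Type*} [MetricSpace M]
    (hgeo : ∀ a b : M, ∃ γ : ℝ → M, γ 0 = a ∧ γ (dist a b) = b ∧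
      ∀ s ∈ Set.Icc (0 : ℝ) (dist a b), ∀ t ∈ Set.Icc (0 : ℝ) (dist a b),
        dist (γ s) (γ t) = |s - t|)
    {ε : ℝ} (hε : 0 < ε) {V : Set M} {p q : V}
    (hne : (p : M) ≠ (q : M)) (h4 : dist (p : M) (q : M) < 4 * ε) :
    (netGraph ε V).Adj p q := by
  obtain ⟨γ, h0, hdq, hiso⟩ := hgeo (p : M) (q : M)
  have hd0 : 0 < dist (p : M) (q : M) := dist_pos.mpr hne
  set d := dist (p : M) (q : M) with hd
  have hmem : d / 2 ∈ Set.Icc (0:ℝ) d := ⟨by linarith, by linarith⟩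
  have h0' : (0:ℝ) ∈ Set.Icc (0:ℝ) d := ⟨le_rfl, by linarith⟩
  have hd' : d ∈ Set.Icc (0:ℝ) d := ⟨by linarith, le_rfl⟩
  refine ⟨fun h => hne (congrArg Subtype.val h), ⟨γ (d/2), ?_, ?_⟩⟩
  · have h1 : dist (γ (d/2)) (γ 0) = |d/2 - 0| := hiso _ hmem _ h0'
    rw [h0] at h1
    refine Metric.mem_ball.mpr ?_
    rw [h1, abs_of_nonneg (by linarith)]
    linarith
  · have h1 : dist (γ (d/2)) (γ d) = |d/2 - d| := hiso _ hmem _ hd'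
    rw [hdq] at h1
    refine Metric.mem_ball.mpr ?_
    rw [h1, abs_of_nonpos (by linarith)]
    linarith

private lemma netGraph_walk_dist {M : Type*} [MetricSpace M] {ε : ℝ} (hε : 0 < ε)
    {V : Set M} {p q : V} (w : (netGraph ε V).Walk p q) :
    dist (p : M) (q : M) ≤ 4 * ε * w.length := by
  induction w with
  | nil => simp
  | @cons a b c h w ih =>
    obtain ⟨hne, z, hz1, hz2⟩ := id h
    rw [Metric.mem_ball] at hz1 hz2
    have h1 : dist (a : M) (b : M) < 4 * ε := by
      have ht := dist_triangle (a : M) z (b : M)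
      have hz1' : dist (a : M) z < 2 * ε := by rw [dist_comm]; exact hz1
      linarith
    have h2 := dist_triangle (a : M) (b : M) (c : M)
    simp only [SimpleGraph.Walk.length_cons]
    push_cast
    nlinarith [ih]

/-- On a geodesic space, the graph distance in the `ε`-net graph `G_ε` compares to the
metric distance: `d_M(x,y)/(4ε) ≤ d_{G_ε}(x,y) ≤ (Δ(ε)/(2ε)) d_M(x,y)` for distinct
vertices, where `Δ` bounds the `ε`-packing numbers of `5ε`-balls. -/
theorem stmt8 {M : Type*} [MetricSpace M]
    (hgeo : ∀ a b : M, ∃ γ : ℝ → M, γ 0 = a ∧ γ (dist a b) = b ∧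
      ∀ s ∈ Set.Icc (0 : ℝ) (dist a b), ∀ t ∈ Set.Icc (0 : ℝ) (dist a b),
        dist (γ s) (γ t) = |s - t|)
    (ε : ℝ) (hε : 0 < ε) (V : Set M)
    (hdisj : V.Pairwise fun x y => Disjoint (Metric.ball x ε) (Metric.ball y ε))
    (hcov : (⋃ x ∈ V, Metric.ball x (2 * ε)) = Set.univ)
    (Δ : ℕ)
    (hΔ : ∀ (x : M) (F : Finset M),
      (∀ p ∈ F, Metric.ball p ε ⊆ Metric.ball x (5 * ε)) →
      (F : Set M).Pairwise (fun p q => Disjoint (Metric.ball p ε) (Metric.ball q ε)) →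
      F.card ≤ Δ)
    (x y : V) (hxy : x ≠ y) :
    dist (x : M) (y : M) / (4 * ε) ≤ ((netGraph ε V).dist x y : ℝ) ∧
      ((netGraph ε V).dist x y : ℝ) ≤ (Δ / (2 * ε)) * dist (x : M) (y : M) := by
  classical
  obtain ⟨γ, hγ0, hγL, hγd⟩ := hgeo (x : M) (y : M)
  set L : ℝ := dist (x : M) (y : M) with hLdef
  have hxyM : (x : M) ≠ (y : M) := Subtype.coe_ne_coe.mpr hxy
  have hL0 : 0 ≤ L := dist_nonneg
  have h4e : (0:ℝ) < 4 * ε := by linarith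
  have hdγ : ∀ s t : ℝ, 0 ≤ s → s ≤ L → 0 ≤ t → t ≤ L → dist (γ s) (γ t) = |s - t| :=
    fun s t hs hs' ht ht' => hγd s ⟨hs, hs'⟩ t ⟨ht, ht'⟩
  -- `2ε ≤ L` by disjointness of the `ε`-balls around `x` and `y`.
  have hL2 : 2 * ε ≤ L := by
    by_contra hcon
    push_neg at hcon
    have hdisj' := hdisj x.2 y.2 hxyM
    have h1 : dist (γ (L/2)) (x : M) < ε := by
      rw [← hγ0, hdγ (L/2) 0 (by linarith) (by linarith) le_rfl hL0,
        abs_of_nonneg (by linarith)]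
      linarith
    have h2 : dist (γ (L/2)) (y : M) < ε := by
      rw [← hγL, hdγ (L/2) L (by linarith) (by linarith) hL0 le_rfl,
        abs_of_nonpos (by linarith)]
      linarith
    exact Set.disjoint_left.mp hdisj' (Metric.mem_ball.mpr h1) (Metric.mem_ball.mpr h2)
  have hLpos : 0 < L := by linarith
  -- `1 ≤ Δ`.
  have hΔ1 : 1 ≤ Δ := by
    have := hΔ (x : M) {(x : M)}
      (by
        intro p hp
        rw [Finset.mem_singleton] at hp
        subst hp
        exact Metric.ball_subset_ball (by linarith))
      (by simp)
    simpa using this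
  set k : ℕ := ⌈L / (4 * ε)⌉₊ with hkdef
  have hk1 : 1 ≤ k := Nat.one_le_iff_ne_zero.mpr (by
    have : 0 < k := Nat.ceil_pos.mpr (by positivity)
    omega)
  -- Counting lemma: any finite set of net points lying `2ε`-close to the geodesic
  -- has at most `k * Δ` elements.
  have hcount : ∀ B : Finset V,
      (∀ b ∈ B, ∃ s, 0 ≤ s ∧ s ≤ L ∧ dist (b : M) (γ s) ≤ 2 * ε) → B.card ≤ k * Δ := by
    intro B hB
    set Q : ℕ → Finset V := fun i => B.filter (fun b : V =>
        ∃ s, 0 ≤ s ∧ s ≤ L ∧ dist (b : M) (γ s) ≤ 2 * ε ∧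
          4 * ε * i ≤ s ∧ s ≤ 4 * ε * (i + 1)) with hQ
    have hQmem : ∀ i : ℕ, ∀ b : V, b ∈ Q i ↔ (b ∈ B ∧
        ∃ s, 0 ≤ s ∧ s ≤ L ∧ dist (b : M) (γ s) ≤ 2 * ε ∧
          4 * ε * i ≤ s ∧ s ≤ 4 * ε * (i + 1)) := by
      intro i b
      rw [hQ]
      exact Finset.mem_filter
    have hsub : B ⊆ (Finset.range k).biUnion Q := by
      intro b hb
      obtain ⟨s, hs0, hsL, hsd⟩ := hB b hb
      have hfl : 4 * ε * (⌊s / (4 * ε)⌋₊ : ℝ) ≤ s := by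
        have h := Nat.floor_le (show (0:ℝ) ≤ s / (4 * ε) by positivity)
        have := mul_le_mul_of_nonneg_left h (le_of_lt h4e)
        calc 4 * ε * (⌊s / (4 * ε)⌋₊ : ℝ) ≤ 4 * ε * (s / (4 * ε)) := this
          _ = s := by field_simp
      refine Finset.mem_biUnion.mpr ⟨min ⌊s / (4 * ε)⌋₊ (k - 1), Finset.mem_range.mpr ?_,
        (hQmem _ _).mpr ⟨hb, s, hs0, hsL, hsd, ?_, ?_⟩⟩
      · have : min ⌊s / (4 * ε)⌋₊ (k - 1) ≤ k - 1 := min_le_right _ _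
        omega
      · have hmle : ((min ⌊s / (4 * ε)⌋₊ (k - 1) : ℕ) : ℝ) ≤ (⌊s / (4 * ε)⌋₊ : ℝ) := by
          exact_mod_cast (min_le_left _ _)
        nlinarith [hmle]
      · rcases le_or_gt (⌊s / (4 * ε)⌋₊) (k - 1) with hc | hc
        · rw [min_eq_left hc]
          have h := Nat.lt_floor_add_one (s / (4 * ε))
          rw [div_lt_iff₀ h4e] at h
          linarith
        · rw [min_eq_right (le_of_lt hc)]
          have hk' : (((k - 1 : ℕ)) : ℝ) + 1 = (k : ℝ) := by
            have : ((k - 1 : ℕ) : ℝ) = (k : ℝ) - 1 := by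
              push_cast [Nat.cast_sub hk1]
              ring
            rw [this]; ring
          have hLk : L ≤ 4 * ε * k := by
            have h := Nat.le_ceil (L / (4 * ε))
            rw [div_le_iff₀ h4e] at h
            rw [← hkdef] at h
            linarith
          rw [hk']
          linarith
    have hfil : ∀ i ∈ Finset.range k, (Q i).card ≤ Δ := by
      intro i _
      set F := Q i with hF
      have hinj : (F.image (Subtype.val)).card = F.card :=
        Finset.card_image_of_injective F Subtype.val_injective
      rw [← hinj]
      set c : ℝ := min (4 * ε * i + 2 * ε) L with hc
      have hc0 : 0 ≤ c := le_min (by positivity) hL0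
      have hcL : c ≤ L := min_le_right _ _
      refine hΔ (γ c) (F.image Subtype.val) ?_ ?_
      · intro pM hpM
        obtain ⟨b, hbF, rfl⟩ := Finset.mem_image.mp hpM
        obtain ⟨hbB, s, hs0, hsL, hsd, hsl, hsu⟩ := (hQmem _ _).mp hbF
        have habs : |s - c| ≤ 2 * ε := by
          rcases le_or_gt (4 * ε * i + 2 * ε) L with h | h
          · rw [show c = 4 * ε * i + 2 * ε from min_eq_left h, abs_le]
            constructor <;> linarith
          · rw [show c = L from min_eq_right (le_of_lt h), abs_le]
            constructor <;> linarith
        have hbc : dist (b : M) (γ c) ≤ 4 * ε := by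
          have h1 : dist (γ s) (γ c) = |s - c| := hdγ s c hs0 hsL hc0 hcL
          calc dist (b : M) (γ c) ≤ dist (b : M) (γ s) + dist (γ s) (γ c) :=
              dist_triangle _ _ _
            _ ≤ 2 * ε + 2 * ε := by rw [h1]; linarith
            _ = 4 * ε := by ring
        intro z hz
        rw [Metric.mem_ball] at hz ⊢
        calc dist z (γ c) ≤ dist z (b : M) + dist (b : M) (γ c) := dist_triangle _ _ _
          _ < 5 * ε := by linarith
      · intro pM hpM qM hqM hpq
        rw [Finset.mem_coe] at hpM hqM
        obtain ⟨b, _, rfl⟩ := Finset.mem_image.mp hpM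
        obtain ⟨b', _, rfl⟩ := Finset.mem_image.mp hqM
        exact hdisj b.2 b'.2 hpq
    calc B.card ≤ ((Finset.range k).biUnion Q).card := Finset.card_le_card hsub
      _ ≤ ∑ i ∈ Finset.range k, (Q i).card := Finset.card_biUnion_le
      _ ≤ ∑ _i ∈ Finset.range k, Δ := Finset.sum_le_sum hfil
      _ = k * Δ := by simp [Finset.sum_const, Finset.card_range, smul_eq_mul]
  -- Main recursion: greedy walk construction along the geodesic.
  have key : ∀ n : ℕ, ∀ p : V, ∀ t : ℝ, ∀ A : Finset V,
      0 ≤ t → t ≤ L → dist (p : M) (γ t) < 2 * ε →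
      (∀ a ∈ A, ∀ s, t < s → s ≤ L → 2 * ε < dist (a : M) (γ s)) →
      (∀ a ∈ A, ∃ s, 0 ≤ s ∧ s ≤ L ∧ dist (a : M) (γ s) ≤ 2 * ε) →
      p ∉ A → k * Δ ≤ A.card + n →
      ∃ w : (netGraph ε V).Walk p y, w.length ≤ n := by
    intro n
    induction n with
    | zero =>
      intro p t A ht0 htL hpt hdead hAS hpA hcard
      exfalso
      have h1 : (insert p A).card ≤ k * Δ := hcount _ (by
        intro b hb
        rcases Finset.mem_insert.mp hb with rfl | hbA
        · exact ⟨t, ht0, htL, le_of_lt hpt⟩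
        · exact hAS b hbA)
      rw [Finset.card_insert_of_notMem hpA] at h1
      omega
    | succ n ih =>
      intro p t A ht0 htL hpt hdead hAS hpA hcard
      by_cases hpy : p = y
      · subst hpy
        exact ⟨SimpleGraph.Walk.nil, by simp⟩
      by_cases hnear : dist (p : M) (y : M) < 4 * ε
      · have hne : (p : M) ≠ (y : M) := fun h => hpy (Subtype.ext h)
        refine ⟨SimpleGraph.Walk.cons (netGraph_adj_of hgeo hε hne hnear)
          SimpleGraph.Walk.nil, ?_⟩
        simp
      push_neg at hnear
      have htL' : t < L := by
        rcases lt_or_eq_of_le htL with h | h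
        · exact h
        · exfalso; rw [h, hγL] at hpt; linarith
      set T : Set ℝ := {s | t ≤ s ∧ s ≤ L ∧ dist (p : M) (γ s) ≤ 2 * ε} with hT
      have hTmem : t ∈ T := ⟨le_rfl, htL, le_of_lt hpt⟩
      have hTne : T.Nonempty := ⟨t, hTmem⟩
      have hTbdd : BddAbove T := ⟨L, fun s hs => hs.2.1⟩
      set u := sSup T with hu
      have hut : t ≤ u := le_csSup hTbdd hTmem
      have huL : u ≤ L := csSup_le hTne (fun s hs => hs.2.1)
      have hu0 : 0 ≤ u := le_trans ht0 hut
      have hud : dist (p : M) (γ u) ≤ 2 * ε := by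
        by_contra hcon
        push_neg at hcon
        obtain ⟨s, hsT, hs⟩ := exists_lt_of_lt_csSup hTne
          (show u - (dist (p : M) (γ u) - 2 * ε) / 2 < u by linarith)
        have hsu : s ≤ u := le_csSup hTbdd hsT
        have h1 : dist (γ s) (γ u) = |s - u| :=
          hdγ s u (le_trans ht0 hsT.1) hsT.2.1 hu0 huL
        have h2 : dist (p : M) (γ u) ≤ dist (p : M) (γ s) + dist (γ s) (γ u) :=
          dist_triangle _ _ _
        rw [h1, abs_of_nonpos (by linarith), neg_sub] at h2
        have h3 := hsT.2.2
        linarith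
      have hafter : ∀ s, u < s → s ≤ L → 2 * ε < dist (p : M) (γ s) := by
        intro s hus hsL
        by_contra hcon
        push_neg at hcon
        have hsT : s ∈ T := ⟨le_trans hut (le_of_lt hus), hsL, hcon⟩
        have := le_csSup hTbdd hsT
        linarith
      have hext : ∀ v, t ≤ v → v < L → dist (p : M) (γ v) < 2 * ε → ∃ s ∈ T, v < s := by
        intro v hv1 hv2 hv3
        have hv0 : 0 ≤ v := le_trans ht0 hv1
        set s' : ℝ := min L (v + (2 * ε - dist (p : M) (γ v))) with hs'
        have hvs' : v ≤ s' := le_min (le_of_lt hv2) (by linarith)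
        have hs'L : s' ≤ L := min_le_left _ _
        have hs'0 : 0 ≤ s' := le_trans hv0 hvs'
        have hs'v : s' ≤ v + (2 * ε - dist (p : M) (γ v)) := min_le_right _ _
        have h1 : dist (γ v) (γ s') = |v - s'| := hdγ v s' hv0 (le_of_lt hv2) hs'0 hs'L
        have h2 : dist (p : M) (γ s') ≤ dist (p : M) (γ v) + dist (γ v) (γ s') :=
          dist_triangle _ _ _
        rw [h1, abs_of_nonpos (by linarith), neg_sub] at h2
        refine ⟨s', ⟨le_trans hv1 hvs', hs'L, by linarith⟩, ?_⟩
        exact lt_min hv2 (by linarith)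
      have htu : t < u := by
        obtain ⟨s, hsT, hs⟩ := hext t le_rfl htL' hpt
        exact lt_of_lt_of_le hs (le_csSup hTbdd hsT)
      have huL' : u < L := by
        rcases lt_or_eq_of_le huL with h | h
        · exact h
        · exfalso; rw [h, hγL] at hud; linarith
      have hmemu : γ u ∈ ⋃ z ∈ V, Metric.ball z (2 * ε) := by rw [hcov]; trivial
      obtain ⟨qM, hqV, hqb⟩ := Set.mem_iUnion₂.mp hmemu
      set q : V := ⟨qM, hqV⟩ with hq
      have hqd : dist (q : M) (γ u) < 2 * ε := by
        rw [dist_comm]; exact Metric.mem_ball.mp hqb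
      have hqp : (q : M) ≠ (p : M) := by
        intro h
        have hpu : dist (p : M) (γ u) < 2 * ε := by rw [← h]; exact hqd
        obtain ⟨s, hsT, hs⟩ := hext u hut huL' hpu
        exact absurd (le_csSup hTbdd hsT) (not_le.mpr hs)
      have hpq4 : dist (p : M) (q : M) < 4 * ε := by
        calc dist (p : M) (q : M) ≤ dist (p : M) (γ u) + dist (γ u) (q : M) :=
            dist_triangle _ _ _
          _ = dist (p : M) (γ u) + dist (q : M) (γ u) := by rw [dist_comm (γ u) (q : M)]
          _ < 4 * ε := by linarith
      have hadj : (netGraph ε V).Adj p q :=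
        netGraph_adj_of hgeo hε (fun h => hqp h.symm) hpq4
      have hdead' : ∀ a ∈ insert p A, ∀ s, u < s → s ≤ L → 2 * ε < dist (a : M) (γ s) := by
        intro a ha s hus hsL
        rcases Finset.mem_insert.mp ha with rfl | haA
        · exact hafter s hus hsL
        · exact hdead a haA s (lt_trans htu hus) hsL
      have hAS' : ∀ a ∈ insert p A, ∃ s, 0 ≤ s ∧ s ≤ L ∧ dist (a : M) (γ s) ≤ 2 * ε := by
        intro a ha
        rcases Finset.mem_insert.mp ha with rfl | haA
        · exact ⟨t, ht0, htL, le_of_lt hpt⟩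
        · exact hAS a haA
      have hqnot : q ∉ insert p A := by
        intro hqin
        rcases Finset.mem_insert.mp hqin with h | h
        · exact hqp (congrArg Subtype.val h)
        · exact absurd hqd (not_lt.mpr (le_of_lt (hdead q h u htu huL)))
      have hcard' : k * Δ ≤ (insert p A).card + n := by
        rw [Finset.card_insert_of_notMem hpA]
        omega
      obtain ⟨w, hw⟩ := ih q u (insert p A) hu0 huL hqd hdead' hAS' hqnot hcard'
      refine ⟨SimpleGraph.Walk.cons hadj w, ?_⟩
      simp only [SimpleGraph.Walk.length_cons]
      omega
  -- Build the walk from `x` to `y`.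
  have hstart : dist (x : M) (γ 0) < 2 * ε := by
    rw [hγ0, dist_self]; linarith
  obtain ⟨w, hw⟩ := key (k * Δ) x 0 ∅ le_rfl hL0 hstart
    (by intro a ha; exact absurd ha (Finset.notMem_empty a))
    (by intro a ha; exact absurd ha (Finset.notMem_empty a))
    (Finset.notMem_empty x)
    (by simp)
  have hreach : (netGraph ε V).Reachable x y := ⟨w⟩
  set D : ℕ := (netGraph ε V).dist x y with hD
  constructor
  · -- lower bound
    obtain ⟨w0, hw0⟩ := hreach.exists_walk_length_eq_dist
    have h1 : L ≤ 4 * ε * w0.length := netGraph_walk_dist hε w0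
    rw [hw0] at h1
    rw [div_le_iff₀ h4e]
    calc L ≤ 4 * ε * D := h1
      _ = (D : ℝ) * (4 * ε) := by ring
  · -- upper bound
    have hΔR : (1:ℝ) ≤ (Δ : ℝ) := by exact_mod_cast hΔ1
    by_cases hL4 : L < 4 * ε
    · have hadj := netGraph_adj_of hgeo hε hxyM hL4
      have hD1 : D ≤ 1 := by
        have := SimpleGraph.dist_le hadj.toWalk
        simpa using this
      have hD1R : (D : ℝ) ≤ 1 := by exact_mod_cast hD1
      rw [div_mul_eq_mul_div, le_div_iff₀ (by linarith : (0:ℝ) < 2 * ε)]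
      nlinarith
    · push_neg at hL4
      have hDk : D ≤ k * Δ := le_trans (SimpleGraph.dist_le w) hw
      have hDkR : (D : ℝ) ≤ (k : ℝ) * Δ := by exact_mod_cast hDk
      have hkR : (k : ℝ) ≤ L / (4 * ε) + 1 :=
        le_of_lt (Nat.ceil_lt_add_one (by positivity))
      have hhalf : L / (4 * ε) + 1 ≤ L / (2 * ε) := by
        rw [div_add' _ _ _ (ne_of_gt h4e), div_le_div_iff₀ h4e (by linarith : (0:ℝ) < 2 * ε)]
        ring_nf
        nlinarith
      calc (D : ℝ) ≤ (k : ℝ) * Δ := hDkR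
        _ ≤ (L / (4 * ε) + 1) * Δ := by
            apply mul_le_mul_of_nonneg_right hkR (by positivity)
        _ ≤ (L / (2 * ε)) * Δ := by
            apply mul_le_mul_of_nonneg_right hhalf (by positivity)
        _ = ((Δ : ℝ) / (2 * ε)) * L := by ring
end

section
/- Let G = (V,E) be a locally finite connected graph, fix a vertex x₀ and a parameter p ∈ (0,1), and let X be the random set of vertices obtained by declaring each vertex independently occupied with probability p. Then almost surely the set C = {y ∈ V : d(y, x₀) ≤ d(y, X)} is finite. In particular, all cells of the graph Voronoi diagram induced by X are almost surely finite. -/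
open MeasureTheory

namespace Stmt18Helper

variable {V : Type*}

/-- Chains of potential Voronoi-cell witnesses across annuli. -/
def chains [DecidableEq V] (Anext : ℕ → V → Finset V) : ℕ → ℕ → V → Finset (List V)
  | 0, _, _ => {[]}
  | s+1, j, w => (Anext j w).biUnion fun w' => (chains Anext s (j+1) w').image (List.cons w')

/-- The set of vertices forced vacant by a chain. -/
def vacset [DecidableEq V] (Ap : ℕ → V → Finset V) : ℕ → V → List V → Finset V
  | _, _, [] => ∅
  | j, w, w' :: l => Ap j w ∪ vacset Ap (j+1) w' l

lemma sum_chains_le [DecidableEq V] (Anext Ap : ℕ → V → Finset V) (Good : ℕ → V → Prop)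
    (q β : ℝ) (hq0 : 0 ≤ q) (hβ0 : 0 ≤ β)
    (hnext : ∀ j w w', Good j w → w' ∈ Anext j w → Good (j+1) w')
    (hkey : ∀ j w, Good j w → ((Anext j w).card : ℝ) * q ^ ((Ap j w).card) ≤ β)
    (hdisj : ∀ j w w' l, Good j w → w' ∈ Anext j w →
      Disjoint (Ap j w) (vacset Ap (j+1) w' l)) :
    ∀ s j w, Good j w →
      (∑ l ∈ chains Anext s j w, q ^ (vacset Ap j w l).card) ≤ β ^ s := by
  intro s
  induction s with
  | zero => intro j w _; simp [chains, vacset]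
  | succ s ih =>
    intro j w hw
    have hpd : Set.PairwiseDisjoint ↑(Anext j w)
        (fun w' => (chains Anext s (j+1) w').image (List.cons w')) := by
      intro x _ y _ hxy
      refine Finset.disjoint_left.mpr ?_
      rintro l hlx hly
      obtain ⟨lx, _, rfl⟩ := Finset.mem_image.mp hlx
      obtain ⟨ly, _, hh⟩ := Finset.mem_image.mp hly
      exact hxy ((List.cons.inj hh).1).symm
    rw [chains, Finset.sum_biUnion hpd]
    have hstep : ∀ w' ∈ Anext j w,
        (∑ l ∈ (chains Anext s (j+1) w').image (List.cons w'), q ^ (vacset Ap j w l).card)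
          ≤ q ^ (Ap j w).card * β ^ s := by
      intro w' hw'
      rw [Finset.sum_image (by intro a _ b _ h; exact (List.cons.inj h).2)]
      have hcard : ∀ l', (vacset Ap j w (w' :: l')).card
          = (Ap j w).card + (vacset Ap (j+1) w' l').card := by
        intro l'
        show (Ap j w ∪ vacset Ap (j+1) w' l').card = _
        exact Finset.card_union_of_disjoint (hdisj j w w' l' hw hw')
      calc (∑ l' ∈ chains Anext s (j+1) w', q ^ (vacset Ap j w (w' :: l')).card)
          = ∑ l' ∈ chains Anext s (j+1) w',
              q ^ (Ap j w).card * q ^ (vacset Ap (j+1) w' l').card := by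
            refine Finset.sum_congr rfl fun l' _ => ?_
            rw [hcard l', pow_add]
        _ = q ^ (Ap j w).card *
              ∑ l' ∈ chains Anext s (j+1) w', q ^ (vacset Ap (j+1) w' l').card := by
            rw [Finset.mul_sum]
        _ ≤ q ^ (Ap j w).card * β ^ s := by
            exact mul_le_mul_of_nonneg_left (ih (j+1) w' (hnext j w w' hw hw'))
              (pow_nonneg hq0 _)
    calc (∑ w' ∈ Anext j w, ∑ l ∈ (chains Anext s (j+1) w').image (List.cons w'),
            q ^ (vacset Ap j w l).card)
        ≤ ∑ _w' ∈ Anext j w, q ^ (Ap j w).card * β ^ s := Finset.sum_le_sum hstep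
      _ = ((Anext j w).card : ℝ) * (q ^ (Ap j w).card * β ^ s) := by
          rw [Finset.sum_const, nsmul_eq_mul]
      _ = (((Anext j w).card : ℝ) * q ^ (Ap j w).card) * β ^ s := by ring
      _ ≤ β * β ^ s := mul_le_mul_of_nonneg_right (hkey j w hw) (pow_nonneg hβ0 _)
      _ = β ^ (s+1) := by ring

lemma range_map_succ (g : ℕ → V) (j s : ℕ) :
    (List.range (s+1)).map (fun t => g (j+1+t))
      = g (j+1) :: ((List.range s).map (fun t => g (j+2+t))) := by
  rw [List.range_succ_eq_map, List.map_cons, List.map_map]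
  refine congrArg₂ _ rfl ?_
  refine List.map_congr_left fun t _ => ?_
  show g (j+1+(t+1)) = g (j+2+t)
  congr 1
  omega

lemma witness_mem_chains [DecidableEq V] (Anext : ℕ → V → Finset V) (g : ℕ → V) :
    ∀ s j, (∀ i, j ≤ i → i < j + s → g (i+1) ∈ Anext i (g i)) →
      ((List.range s).map (fun t => g (j+1+t))) ∈ chains Anext s j (g j) := by
  intro s
  induction s with
  | zero => intro j _; simp [chains]
  | succ s ih =>
    intro j hstep
    rw [chains, Finset.mem_biUnion]
    refine ⟨g (j+1), hstep j le_rfl (by omega), ?_⟩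
    rw [Finset.mem_image]
    exact ⟨(List.range s).map (fun t => g (j+2+t)),
      ih (j+1) (fun i h1 h2 => hstep i (by omega) (by omega)),
      (range_map_succ g j s).symm⟩

lemma vacset_witness [DecidableEq V] (Ap : ℕ → V → Finset V) (g : ℕ → V) :
    ∀ s j u, u ∈ vacset Ap j (g j) ((List.range s).map (fun t => g (j+1+t))) →
      ∃ i, j ≤ i ∧ i < j + s ∧ u ∈ Ap i (g i) := by
  intro s
  induction s with
  | zero => intro j u hu; simp [vacset] at hu
  | succ s ih =>
    intro j u hu
    rw [range_map_succ] at hu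
    rw [vacset, Finset.mem_union] at hu
    rcases hu with hu | hu
    · exact ⟨j, le_rfl, by omega, hu⟩
    · obtain ⟨i, h1, h2, h3⟩ := ih (j+1) u hu
      exact ⟨i, by omega, by omega, h3⟩

variable {V : Type*} (G : SimpleGraph V)

lemma dist_getVert_le (hG : G.Connected) {u v : V} (p : G.Walk u v) :
    ∀ {a b : ℕ}, a ≤ b → G.dist (p.getVert a) (p.getVert b) ≤ b - a := by
  intro a b
  induction b with
  | zero =>
    intro hab
    have : a = 0 := by omega
    subst this
    simp [SimpleGraph.dist_self]
  | succ b ihb =>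
    intro hab
    rcases Nat.lt_or_ge a (b+1) with h | h
    · have hab' : a ≤ b := by omega
      have h1 : G.dist (p.getVert b) (p.getVert (b+1)) ≤ 1 := by
        by_cases hb : b < p.length
        · exact le_of_eq (SimpleGraph.dist_eq_one_iff_adj.mpr (p.adj_getVert_succ hb))
        · have h2 : p.getVert (b+1) = p.getVert b := by
            rw [p.getVert_of_length_le (by omega), p.getVert_of_length_le (by omega)]
          rw [h2]
          simp [SimpleGraph.dist_self]
      calc G.dist (p.getVert a) (p.getVert (b+1))
          ≤ G.dist (p.getVert a) (p.getVert b) + G.dist (p.getVert b) (p.getVert (b+1)) :=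
            hG.dist_triangle
        _ ≤ (b - a) + 1 := add_le_add (ihb hab') h1
        _ ≤ b + 1 - a := by omega
    · have : a = b + 1 := by omega
      subst this
      simp [SimpleGraph.dist_self]

lemma getVert_dist (hG : G.Connected) {c y : V} (p : G.Walk c y) (hp : p.length = G.dist c y)
    {i : ℕ} (hi : i ≤ p.length) :
    G.dist c (p.getVert i) = i ∧ G.dist (p.getVert i) y = p.length - i := by
  have h1 : G.dist c (p.getVert i) ≤ i := by
    have := dist_getVert_le G hG p (Nat.zero_le i)
    simpa [p.getVert_zero] using this
  have h2 : G.dist (p.getVert i) y ≤ p.length - i := by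
    have := dist_getVert_le G hG p hi
    simpa [p.getVert_length] using this
  have h3 : p.length ≤ G.dist c (p.getVert i) + G.dist (p.getVert i) y := by
    rw [hp]
    exact hG.dist_triangle
  omega

lemma finite_ball (hG : G.Connected) [G.LocallyFinite] (c : V) :
    ∀ R : ℕ, {u | G.dist c u ≤ R}.Finite := by
  intro R
  induction R with
  | zero =>
    refine Set.Finite.subset (Set.finite_singleton c) ?_
    intro u hu
    simp only [Set.mem_setOf_eq, Nat.le_zero] at hu
    simp [((hG.dist_eq_zero_iff).mp hu).symm]
  | succ R ih =>
    have hsub : {u | G.dist c u ≤ R+1} ⊆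
        {u | G.dist c u ≤ R} ∪ ⋃ w ∈ {u | G.dist c u ≤ R}, G.neighborSet w := by
      intro y hy
      simp only [Set.mem_setOf_eq] at hy
      by_cases h : G.dist c y ≤ R
      · exact Or.inl h
      · right
        have hD : G.dist c y = R + 1 := by omega
        obtain ⟨p, hp⟩ := hG.exists_walk_length_eq_dist c y
        have hlen : p.length = R + 1 := by rw [hp, hD]
        have hw : G.dist c (p.getVert R) = R := (getVert_dist G hG p hp (by omega)).1
        have hadj : G.Adj (p.getVert R) y := by
          have := p.adj_getVert_succ (i := R) (by omega)
          rwa [show R + 1 = p.length by omega, p.getVert_length] at this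
        exact Set.mem_biUnion (show G.dist c (p.getVert R) ≤ R by omega) hadj
    exact Set.Finite.subset (ih.union (Set.Finite.biUnion ih
      (fun w _ => (G.neighborSet w).toFinite))) hsub


lemma nat_mul_pow_le {q : ℝ} (hq0 : 0 ≤ q) (hq1 : q < 1) (l : ℕ) :
    (l : ℝ) * q ^ l ≤ (1 - q)⁻¹ := by
  have hpos : 0 < 1 - q := by linarith
  have h1 : (l : ℝ) * q ^ l ≤ ∑ j ∈ Finset.range l, q ^ j := by
    calc (l : ℝ) * q ^ l = ∑ _j ∈ Finset.range l, q ^ l := by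
          rw [Finset.sum_const, Finset.card_range, nsmul_eq_mul]
      _ ≤ ∑ j ∈ Finset.range l, q ^ j :=
          Finset.sum_le_sum fun j hj =>
            pow_le_pow_of_le_one hq0 hq1.le (Finset.mem_range.mp hj).le
  have h2 : ∑ j ∈ Finset.range l, q ^ j ≤ (1 - q)⁻¹ := by
    rw [geom_sum_eq hq1.ne l]
    have heq : (q ^ l - 1) / (q - 1) = (1 - q ^ l) / (1 - q) := by
      rw [← neg_div_neg_eq, neg_sub, neg_sub]
    rw [heq, ← one_div]
    exact (div_le_div_iff_of_pos_right hpos).mpr (by nlinarith [pow_nonneg hq0 l])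
  linarith



open Filter in
lemma cell_infinite_zero {V : Type*} [Countable V] (G : SimpleGraph V) (hG : G.Connected)
    [G.LocallyFinite]
    {Ω : Type*} [MeasurableSpace Ω] (P : MeasureTheory.Measure Ω)
    [MeasureTheory.IsProbabilityMeasure P]
    (p : ℝ) (hp : p ∈ Set.Ioo (0 : ℝ) 1) (X : V → Ω → Bool)
    (hiid : ∀ (s : Finset V) (b : V → Bool),
      P {ω | ∀ v ∈ s, X v ω = b v} =
        ∏ v ∈ s, (if b v then ENNReal.ofReal p else ENNReal.ofReal (1 - p)))
    (c : V) :
    P {ω | ¬ {y : V | ∀ z : V, X z ω = true → G.dist y c ≤ G.dist y z}.Finite} = 0 := by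
  classical
  obtain ⟨hp0, hp1⟩ := hp
  set q : ℝ := 1 - p with hqdef
  have hq0 : 0 < q := by rw [hqdef]; linarith
  have hq1 : q < 1 := by rw [hqdef]; linarith
  obtain ⟨k, hk⟩ := exists_pow_lt_of_lt_one (x := (1 - q)/2) (by rw [hqdef]; linarith) hq1
  set K : ℕ := k + 1 with hKdef
  have hK1 : 1 ≤ K := by omega
  have hkey0 : ∀ l : ℕ, (l : ℝ) * q ^ (l + k) ≤ 1/2 := by
    intro l
    have hne : (1 - q) ≠ 0 := by rw [hqdef]; intro h; linarith [sub_eq_zero.mp h]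
    have h1 : (l : ℝ) * q ^ (l + k) = ((l : ℝ) * q ^ l) * q ^ k := by rw [pow_add, mul_assoc]
    have h2 : ((l : ℝ) * q ^ l) * q ^ k ≤ (1 - q)⁻¹ * q ^ k :=
      mul_le_mul_of_nonneg_right (nat_mul_pow_le hq0.le hq1 l) (pow_nonneg hq0.le k)
    have h3 : (1 - q)⁻¹ * q ^ k ≤ (1 - q)⁻¹ * ((1 - q)/2) := by
      apply mul_le_mul_of_nonneg_left hk.le
      rw [inv_nonneg]
      rw [hqdef]; linarith
    have h4 : (1 - q)⁻¹ * ((1 - q)/2) = 1/2 := by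
      field_simp
    linarith
  set A : ℕ → V → Finset V := fun j w =>
    ((finite_ball G hG w K).toFinset.filter (fun u => G.dist c u = (j+1) * K)) with hAdef
  set Ap : ℕ → V → Finset V := fun j w =>
    ((finite_ball G hG w K).toFinset.filter (fun u => j * K < G.dist c u)) with hApdef
  set Good : ℕ → V → Prop := fun j w => 2 ≤ j ∧ G.dist c w = j * K with hGooddef
  have hmemA : ∀ j w u, u ∈ A j w ↔ (G.dist w u ≤ K ∧ G.dist c u = (j+1) * K) := by
    intro j w u
    simp [hAdef, Set.Finite.mem_toFinset]
  have hmemAp : ∀ j w u, u ∈ Ap j w ↔ (G.dist w u ≤ K ∧ j * K < G.dist c u) := by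
    intro j w u
    simp [hApdef, Set.Finite.mem_toFinset]
  have hnext : ∀ j w w', Good j w → w' ∈ A j w → Good (j+1) w' := by
    intro j w w' hw hw'
    obtain ⟨h2j, _⟩ := hw
    exact ⟨by omega, ((hmemA j w w').mp hw').2⟩
  have hvac_lev : ∀ l j w u, u ∈ vacset Ap j w l → j * K < G.dist c u := by
    intro l
    induction l with
    | nil => intro j w u hu; simp [vacset] at hu
    | cons w'' l ihl =>
      intro j w u hu
      rw [vacset, Finset.mem_union] at hu
      rcases hu with hu | hu
      · exact ((hmemAp j w u).mp hu).2
      · have h1 := ihl (j+1) w'' u hu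
        have hle : j * K ≤ (j+1) * K := Nat.mul_le_mul_right K (by omega)
        omega
  have hdisj : ∀ j w w' l, Good j w → w' ∈ A j w →
      Disjoint (Ap j w) (vacset Ap (j+1) w' l) := by
    intro j w w' l hw _
    refine Finset.disjoint_left.mpr ?_
    intro u hu1 hu2
    have h1 := ((hmemAp j w u).mp hu1).1
    have h2 := hvac_lev l (j+1) w' u hu2
    have h3 : G.dist c u ≤ G.dist c w + G.dist w u := hG.dist_triangle
    rw [hw.2] at h3
    have h4 : (j+1) * K = j * K + K := by ring
    omega
  have hkey : ∀ j w, Good j w → ((A j w).card : ℝ) * q ^ ((Ap j w).card) ≤ 1/2 := by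
    intro j w hw
    rcases Finset.eq_empty_or_nonempty (A j w) with he | ⟨w', hw'⟩
    · rw [he]
      simp only [Finset.card_empty, Nat.cast_zero, zero_mul]
      norm_num
    · have hmem := (hmemA j w w').mp hw'
      have hjj : (j+1) * K = j * K + K := by ring
      have hlow : K ≤ G.dist w w' := by
        have h3 : G.dist c w' ≤ G.dist c w + G.dist w w' := hG.dist_triangle
        rw [hw.2, hmem.2] at h3
        omega
      have heq : G.dist w w' = K := le_antisymm hmem.1 hlow
      obtain ⟨pw, hpw⟩ := hG.exists_walk_length_eq_dist w w'
      have hplen : pw.length = K := by rw [hpw, heq]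
      set T : Finset V := (Finset.range k).image (fun t => pw.getVert (t+1)) with hTdef
      have hTfacts : ∀ t, t < k → G.dist w (pw.getVert (t+1)) = t+1 ∧
          G.dist (pw.getVert (t+1)) w' = K - (t+1) := by
        intro t ht
        have h5 := getVert_dist G hG pw hpw (i := t+1) (by omega)
        rwa [hplen] at h5
      have hTsub : ∀ u ∈ T, u ∈ Ap j w ∧ u ∉ A j w := by
        intro u hu
        obtain ⟨t, ht, rfl⟩ := Finset.mem_image.mp hu
        have ht' := Finset.mem_range.mp ht
        obtain ⟨hd1, hd2⟩ := hTfacts t ht'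
        constructor
        · rw [hmemAp]
          constructor
          · omega
          · have h3 : G.dist c w' ≤ G.dist c (pw.getVert (t+1))
                + G.dist (pw.getVert (t+1)) w' := hG.dist_triangle
            rw [hmem.2, hd2] at h3
            omega
        · rw [hmemA]
          rintro ⟨_, hlev⟩
          have h3 : G.dist c (pw.getVert (t+1)) ≤ G.dist c w
              + G.dist w (pw.getVert (t+1)) := hG.dist_triangle
          rw [hw.2, hd1, hlev] at h3
          omega
      have hTcard : T.card = k := by
        rw [hTdef, Finset.card_image_of_injOn, Finset.card_range]
        intro t1 ht1 t2 ht2 hEq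
        simp only [Finset.coe_range, Set.mem_Iio] at ht1 ht2
        have hEq' : pw.getVert (t1+1) = pw.getVert (t2+1) := hEq
        have h1 := (hTfacts t1 ht1).1
        have h2 := (hTfacts t2 ht2).1
        rw [hEq'] at h1
        omega
      have hAsubAp : A j w ⊆ Ap j w := by
        intro u hu
        obtain ⟨h1, h2⟩ := (hmemA j w u).mp hu
        rw [hmemAp]
        exact ⟨h1, by omega⟩
      have hATdisj : Disjoint (A j w) T :=
        Finset.disjoint_left.mpr fun u hu1 hu2 => (hTsub u hu2).2 hu1
      have hcard : (A j w).card + k ≤ (Ap j w).card := by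
        have hsub : (A j w) ∪ T ⊆ Ap j w := by
          intro u hu
          rcases Finset.mem_union.mp hu with hu | hu
          · exact hAsubAp hu
          · exact (hTsub u hu).1
        calc (A j w).card + k = ((A j w) ∪ T).card := by
              rw [Finset.card_union_of_disjoint hATdisj, hTcard]
          _ ≤ (Ap j w).card := Finset.card_le_card hsub
      have hql : q ^ ((Ap j w).card) ≤ q ^ ((A j w).card + k) :=
        pow_le_pow_of_le_one hq0.le hq1.le hcard
      calc ((A j w).card : ℝ) * q ^ ((Ap j w).card)
          ≤ ((A j w).card : ℝ) * q ^ ((A j w).card + k) :=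
            mul_le_mul_of_nonneg_left hql (Nat.cast_nonneg _)
        _ ≤ 1/2 := hkey0 _
  set SphF : Finset V := (finite_ball G hG c (2*K)).toFinset.filter
      (fun w => G.dist c w = 2*K) with hSphdef
  set Bad : Set Ω := {ω | ¬ {y : V | ∀ z : V, X z ω = true → G.dist y c ≤ G.dist y z}.Finite}
      with hBaddef
  have hbound : ∀ s : ℕ, P Bad ≤ ENNReal.ofReal ((SphF.card : ℝ) * (1/2)^s) := by
    intro s
    have hsub : Bad ⊆ ⋃ w ∈ SphF, ⋃ l ∈ chains A s 2 w,
        {ω | ∀ u ∈ vacset Ap 2 w l, X u ω = false} := by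
      intro ω hω
      rw [hBaddef, Set.mem_setOf_eq] at hω
      have hfar : ∃ y, (∀ z : V, X z ω = true → G.dist y c ≤ G.dist y z) ∧
          (2+s)*K ≤ G.dist c y := by
        by_contra hcon
        push_neg at hcon
        refine hω (Set.Finite.subset (finite_ball G hG c ((2+s)*K)) ?_)
        intro y hy
        simp only [Set.mem_setOf_eq] at hy ⊢
        have := hcon y hy
        omega
      obtain ⟨y, hycell, hyfar⟩ := hfar
      obtain ⟨pw, hpw⟩ := hG.exists_walk_length_eq_dist c y
      set g : ℕ → V := fun i => pw.getVert (i*K) with hgdef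
      have hgfact : ∀ i, i ≤ 2+s →
          G.dist c (g i) = i*K ∧ G.dist (g i) y = G.dist c y - i*K := by
        intro i hi
        have hle : i*K ≤ pw.length := by
          rw [hpw]
          calc i*K ≤ (2+s)*K := Nat.mul_le_mul_right K hi
            _ ≤ G.dist c y := hyfar
        have h5 := getVert_dist G hG pw hpw hle
        rwa [hpw] at h5
      have hsteps : ∀ i, 2 ≤ i → i < 2 + s → g (i+1) ∈ A i (g i) := by
        intro i h2i his
        rw [hmemA]
        refine ⟨?_, (hgfact (i+1) (by omega)).1⟩
        have h5 := dist_getVert_le G hG pw (a := i*K) (b := (i+1)*K)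
          (Nat.mul_le_mul_right K (by omega))
        have harith : (i+1)*K - i*K = K := by
          have : (i+1)*K = i*K + K := by ring
          omega
        rw [harith] at h5
        exact h5
      have hw2 : g 2 ∈ SphF := by
        rw [hSphdef, Finset.mem_filter, Set.Finite.mem_toFinset]
        have h6 := (hgfact 2 (by omega)).1
        exact ⟨le_of_eq h6, h6⟩
      refine Set.mem_iUnion₂.mpr ⟨g 2, hw2, Set.mem_iUnion₂.mpr
        ⟨_, witness_mem_chains A g s 2 hsteps, ?_⟩⟩
      show ∀ u ∈ vacset Ap 2 (g 2) ((List.range s).map (fun t => g (2+1+t))), X u ω = false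
      intro u hu
      obtain ⟨i, h2i, his, hui⟩ := vacset_witness Ap g s 2 u hu
      obtain ⟨hdwu, _⟩ := (hmemAp i (g i) u).mp hui
      have hgi := hgfact i (by omega)
      have hiKD : i*K ≤ G.dist c y := by
        calc i*K ≤ (2+s)*K := Nat.mul_le_mul_right K (by omega)
          _ ≤ G.dist c y := hyfar
      have h2K : 2*K ≤ i*K := Nat.mul_le_mul_right K h2i
      have hduy : G.dist u y ≤ G.dist c y - K := by
        have h7 : G.dist u y ≤ G.dist u (g i) + G.dist (g i) y := hG.dist_triangle
        rw [SimpleGraph.dist_comm (u := u) (v := g i), hgi.2] at h7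
        omega
      by_contra hXu
      rw [Bool.not_eq_false] at hXu
      have h8 := hycell u hXu
      have hyc : G.dist y c = G.dist c y := SimpleGraph.dist_comm
      have hyu : G.dist y u = G.dist u y := SimpleGraph.dist_comm
      have h2KD : 2*K ≤ G.dist c y := le_trans h2K hiKD
      omega
    have hcyl : ∀ (U : Finset V), P {ω | ∀ u ∈ U, X u ω = false}
        = ENNReal.ofReal (q ^ U.card) := by
      intro U
      have h := hiid U (fun _ => false)
      have hev : {ω | ∀ v ∈ U, X v ω = (fun _ : V => false) v}
          = {ω | ∀ u ∈ U, X u ω = false} := rfl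
      rw [hev] at h
      rw [h]
      have hprod : ∀ v ∈ U, (if (fun _ : V => false) v then ENNReal.ofReal p
          else ENNReal.ofReal (1 - p)) = ENNReal.ofReal q := by
        intro v _
        simp [hqdef]
      rw [Finset.prod_congr rfl hprod, Finset.prod_const,
        ← ENNReal.ofReal_pow (by rw [hqdef]; linarith)]
    calc P Bad ≤ P (⋃ w ∈ SphF, ⋃ l ∈ chains A s 2 w,
          {ω | ∀ u ∈ vacset Ap 2 w l, X u ω = false}) := MeasureTheory.measure_mono hsub
      _ ≤ ∑ w ∈ SphF, P (⋃ l ∈ chains A s 2 w,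
            {ω | ∀ u ∈ vacset Ap 2 w l, X u ω = false}) :=
          MeasureTheory.measure_biUnion_finset_le _ _
      _ ≤ ∑ w ∈ SphF, ∑ l ∈ chains A s 2 w,
            P {ω | ∀ u ∈ vacset Ap 2 w l, X u ω = false} :=
          Finset.sum_le_sum fun w _ => MeasureTheory.measure_biUnion_finset_le _ _
      _ = ∑ w ∈ SphF, ∑ l ∈ chains A s 2 w,
            ENNReal.ofReal (q ^ (vacset Ap 2 w l).card) :=
          Finset.sum_congr rfl fun w _ => Finset.sum_congr rfl fun l _ => hcyl _
      _ = ENNReal.ofReal (∑ w ∈ SphF, ∑ l ∈ chains A s 2 w, q ^ (vacset Ap 2 w l).card) := by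
          rw [ENNReal.ofReal_sum_of_nonneg
            (fun w _ => Finset.sum_nonneg fun l _ => pow_nonneg hq0.le _)]
          exact Finset.sum_congr rfl fun w _ =>
            (ENNReal.ofReal_sum_of_nonneg (fun l _ => pow_nonneg hq0.le _)).symm
      _ ≤ ENNReal.ofReal ((SphF.card : ℝ) * (1/2)^s) := by
          apply ENNReal.ofReal_le_ofReal
          calc ∑ w ∈ SphF, ∑ l ∈ chains A s 2 w, q ^ (vacset Ap 2 w l).card
              ≤ ∑ _w ∈ SphF, (1/2:ℝ)^s := Finset.sum_le_sum fun w hw =>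
                sum_chains_le A Ap Good q (1/2) hq0.le (by norm_num) hnext hkey hdisj s 2 w
                  ⟨le_rfl, (Finset.mem_filter.mp hw).2⟩
            _ = (SphF.card : ℝ) * (1/2)^s := by rw [Finset.sum_const, nsmul_eq_mul]
  have hlim : Tendsto (fun s : ℕ => ENNReal.ofReal ((SphF.card : ℝ) * (1/2)^s))
      atTop (nhds 0) := by
    have h1 : Tendsto (fun s : ℕ => (SphF.card : ℝ) * (1/2)^s) atTop (nhds 0) := by
      have h2 := (tendsto_pow_atTop_nhds_zero_of_lt_one (by norm_num : (0:ℝ) ≤ 1/2)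
        (by norm_num : (1/2:ℝ) < 1)).const_mul (SphF.card : ℝ)
      simpa using h2
    have h3 := ENNReal.tendsto_ofReal h1
    simpa using h3
  have hfin : P Bad ≤ 0 := ge_of_tendsto' hlim hbound
  exact le_antisymm hfin zero_le

end Stmt18Helper

open MeasureTheory

/-- For Bernoulli(p) site percolation `X` on a locally finite connected countable graph
`G` with a fixed vertex `x₀`, almost surely the set
`C = {y : d(y,x₀) ≤ d(y,X)}` is finite; in particular, all cells of the graph Voronoi
diagram induced by the occupied set are almost surely finite. -/
theorem stmt18 {V : Type*} [Countable V] (G : SimpleGraph V) (hG : G.Connected)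
    [G.LocallyFinite]
    {Ω : Type*} [MeasurableSpace Ω] (P : Measure Ω) [IsProbabilityMeasure P]
    (p : ℝ) (hp : p ∈ Set.Ioo (0 : ℝ) 1) (X : V → Ω → Bool)
    (hiid : ∀ (s : Finset V) (b : V → Bool),
      P {ω | ∀ v ∈ s, X v ω = b v} =
        ∏ v ∈ s, (if b v then ENNReal.ofReal p else ENNReal.ofReal (1 - p)))
    (x₀ : V) :
    P {ω | {y : V | ∀ x : V, X x ω = true → G.dist y x₀ ≤ G.dist y x}.Finite} = 1 ∧
    P {ω | ∀ x : V, X x ω = true →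
        {y : V | ∀ z : V, X z ω = true → G.dist y x ≤ G.dist y z}.Finite} = 1 := by
  classical
  have h0 : ∀ c : V,
      P {ω | ¬ {y : V | ∀ z : V, X z ω = true → G.dist y c ≤ G.dist y z}.Finite} = 0 :=
    fun c => Stmt18Helper.cell_infinite_zero G hG P p hp X hiid c
  constructor
  · refine le_antisymm prob_le_one ?_
    calc (1 : ENNReal) = P Set.univ := measure_univ.symm
      _ = P ({ω | {y : V | ∀ x : V, X x ω = true → G.dist y x₀ ≤ G.dist y x}.Finite}
            ∪ {ω | ¬ {y : V | ∀ x : V, X x ω = true → G.dist y x₀ ≤ G.dist y x}.Finite}) := by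
          congr 1
          ext ω
          simp [em, Set.finite_or_infinite]
      _ ≤ P {ω | {y : V | ∀ x : V, X x ω = true → G.dist y x₀ ≤ G.dist y x}.Finite}
            + P {ω | ¬ {y : V | ∀ x : V, X x ω = true → G.dist y x₀ ≤ G.dist y x}.Finite} :=
          measure_union_le _ _
      _ = P {ω | {y : V | ∀ x : V, X x ω = true → G.dist y x₀ ≤ G.dist y x}.Finite} := by
          rw [h0 x₀, add_zero]
  · refine le_antisymm prob_le_one ?_
    have hU : P (⋃ x : V,
        {ω | ¬ {y : V | ∀ z : V, X z ω = true → G.dist y x ≤ G.dist y z}.Finite}) = 0 := by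
      refine le_antisymm (le_trans (measure_iUnion_le _) (le_of_eq ?_)) zero_le
      calc (∑' x : V,
            P {ω | ¬ {y : V | ∀ z : V, X z ω = true → G.dist y x ≤ G.dist y z}.Finite})
          = ∑' _x : V, (0 : ENNReal) := tsum_congr h0
        _ = 0 := tsum_zero
    calc (1 : ENNReal) = P Set.univ := measure_univ.symm
      _ ≤ P ({ω | ∀ x : V, X x ω = true →
              {y : V | ∀ z : V, X z ω = true → G.dist y x ≤ G.dist y z}.Finite}
            ∪ ⋃ x : V,
              {ω | ¬ {y : V | ∀ z : V, X z ω = true → G.dist y x ≤ G.dist y z}.Finite}) := by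
          refine measure_mono ?_
          intro ω _
          by_cases hB : ∀ x : V, X x ω = true →
              {y : V | ∀ z : V, X z ω = true → G.dist y x ≤ G.dist y z}.Finite
          · exact Or.inl hB
          · push_neg at hB
            obtain ⟨x, _, hfin⟩ := hB
            exact Or.inr (Set.mem_iUnion.mpr ⟨x, hfin⟩)
      _ ≤ P {ω | ∀ x : V, X x ω = true →
              {y : V | ∀ z : V, X z ω = true → G.dist y x ≤ G.dist y z}.Finite}
            + P (⋃ x : V,
              {ω | ¬ {y : V | ∀ z : V, X z ω = true → G.dist y x ≤ G.dist y z}.Finite}) :=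
          measure_union_le _ _
      _ = P {ω | ∀ x : V, X x ω = true →
              {y : V | ∀ z : V, X z ω = true → G.dist y x ≤ G.dist y z}.Finite} := by
          rw [hU, add_zero]
end
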